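/- arXiv:2209.14554 — 5 statements merged into one kernel-verified Lean document; each statement's English description precedes it below -/
import Mathlib

section
/- Let f : ℂ^k × ℂ^k → ℂ be sesquilinear. Then for every orthonormal basis {E_1,…,E_k} of ℂ^k, ∫_{S^{2k−1}} f(Y,Y) dθ(Y) = (V(S^{2k−1})/k) · Σ_{i=1}^k f(E_i,E_i). -/
open MeasureTheory Metric
open scoped Pointwise

noncomputable instance (k : ℕ) : MeasurableSpace (EuclideanSpace ℂ (Fin k)) :=
  MeasurableSpace.comap WithLp.ofLp MeasurableSpace.pi
instance (k : ℕ) : BorelSpace (EuclideanSpace ℂ (Fin k)) := PiLp.borelSpace 2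

/-- The spherical (surface) measure `θ` on the unit sphere `S^{2k-1} ⊂ ℂ^k`. -/
noncomputable def sphereMeasure (k : ℕ) :
    Measure (sphere (0 : EuclideanSpace ℂ (Fin k)) 1) :=
  (volume : Measure (EuclideanSpace ℂ (Fin k))).toSphere

/-- The total volume `V(S^{2k-1})` of the unit sphere. -/
noncomputable def sphereVol (k : ℕ) : ℝ := (sphereMeasure k Set.univ).toReal

/-- `f` is sesquilinear: linear in the first variable, conjugate-linear in the second. -/
def Sesquilinear {H : Type*} [AddCommGroup H] [Module ℂ H] (f : H → H → ℂ) : Prop :=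
  (∀ x x' y, f (x + x') y = f x y + f x' y) ∧
  (∀ (c : ℂ) (x y : H), f (c • x) y = c * f x y) ∧
  (∀ x y y', f x (y + y') = f x y + f x y') ∧
  (∀ (c : ℂ) (x y : H), f x (c • y) = (starRingEnd ℂ) c * f x y)

section Aux

variable {k : ℕ}

local notation "H" k => EuclideanSpace ℂ (Fin k)

/-- induced map on the sphere -/
noncomputable def sphMap (e : EuclideanSpace ℂ (Fin k) ≃ₗᵢ[ℝ] EuclideanSpace ℂ (Fin k))
    (y : sphere (0 : EuclideanSpace ℂ (Fin k)) 1) : sphere (0 : EuclideanSpace ℂ (Fin k)) 1 :=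
  ⟨e y, by
    have := y.2
    simp only [mem_sphere_zero_iff_norm] at this ⊢
    rw [e.norm_map, this]⟩

lemma sphMap_measurePreserving (e : EuclideanSpace ℂ (Fin k) ≃ₗᵢ[ℝ] EuclideanSpace ℂ (Fin k)) :
    MeasurePreserving (sphMap e) (sphereMeasure k) (sphereMeasure k) := by
  have hcont : Continuous (sphMap e) := by
    apply Continuous.subtype_mk
    exact e.continuous.comp continuous_subtype_val
  refine ⟨hcont.measurable, ?_⟩
  ext s hs
  rw [Measure.map_apply hcont.measurable hs]
  have hpre : MeasurableSet (sphMap e ⁻¹' s) := hcont.measurable hs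
  rw [sphereMeasure, Measure.toSphere_apply' _ hpre, Measure.toSphere_apply' _ hs]
  congr 1
  have himg : (Subtype.val '' (sphMap e ⁻¹' s)) = e.symm '' (Subtype.val '' s) := by
    ext z
    constructor
    · rintro ⟨y, hy, rfl⟩
      exact ⟨e y, ⟨sphMap e y, hy, rfl⟩, e.symm_apply_apply y⟩
    · rintro ⟨w, ⟨u, hu, rfl⟩, rfl⟩
      have hmem : e.symm (u : EuclideanSpace ℂ (Fin k)) ∈ sphere (0 : EuclideanSpace ℂ (Fin k)) 1 := by
        have := u.2
        simp only [mem_sphere_zero_iff_norm] at this ⊢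
        rw [e.symm.norm_map, this]
      refine ⟨⟨e.symm u, hmem⟩, ?_, rfl⟩
      show sphMap e ⟨e.symm u, hmem⟩ ∈ s
      have : sphMap e ⟨e.symm u, hmem⟩ = u := Subtype.ext (by simp [sphMap])
      rw [this]; exact hu
  rw [himg]
  have hsmul : Set.Ioo (0:ℝ) 1 • (e.symm '' (Subtype.val '' s))
      = e.symm '' (Set.Ioo (0:ℝ) 1 • (Subtype.val '' s)) := by
    ext z
    simp only [Set.mem_smul, Set.mem_image]
    constructor
    · rintro ⟨r, hr, w, ⟨x, hx, rfl⟩, rfl⟩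
      exact ⟨r • x, ⟨r, hr, x, hx, rfl⟩, (e.symm.map_smul r x)⟩
    · rintro ⟨w, ⟨r, hr, x, hx, rfl⟩, rfl⟩
      exact ⟨r, hr, e.symm x, ⟨x, hx, rfl⟩, (e.symm.map_smul r x).symm⟩
  rw [hsmul]
  have : e.symm '' (Set.Ioo (0:ℝ) 1 • (Subtype.val '' s)) = e ⁻¹' (Set.Ioo (0:ℝ) 1 • (Subtype.val '' s)) := by
    ext z; simp [Set.mem_image, Set.mem_preimage]
    constructor
    · rintro ⟨w, hw, rfl⟩; simpa using hw
    · intro h; exact ⟨e z, h, e.symm_apply_apply z⟩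
  rw [this]
  exact e.measurePreserving.measure_preimage_emb e.toHomeomorph.measurableEmbedding _

lemma integral_sphMap (e : EuclideanSpace ℂ (Fin k) ≃ₗᵢ[ℝ] EuclideanSpace ℂ (Fin k))
    (g : sphere (0 : EuclideanSpace ℂ (Fin k)) 1 → ℂ) (hg : Continuous g) :
    ∫ y, g (sphMap e y) ∂(sphereMeasure k) = ∫ y, g y ∂(sphereMeasure k) := by
  have h := sphMap_measurePreserving e
  calc ∫ y, g (sphMap e y) ∂(sphereMeasure k)
      = ∫ y, g y ∂(Measure.map (sphMap e) (sphereMeasure k)) :=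
        (integral_map h.measurable.aemeasurable hg.aestronglyMeasurable).symm
    _ = ∫ y, g y ∂(sphereMeasure k) := by rw [h.map_eq]

/-- turn a ℂ-linear isometry into an ℝ-linear one -/
noncomputable def complexToRealLIE (e : EuclideanSpace ℂ (Fin k) ≃ₗᵢ[ℂ] EuclideanSpace ℂ (Fin k)) :
    EuclideanSpace ℂ (Fin k) ≃ₗᵢ[ℝ] EuclideanSpace ℂ (Fin k) :=
  { e.toLinearEquiv.restrictScalars ℝ with norm_map' := e.norm_map }

@[simp] lemma complexToRealLIE_apply (e : EuclideanSpace ℂ (Fin k) ≃ₗᵢ[ℂ] EuclideanSpace ℂ (Fin k))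
    (x : EuclideanSpace ℂ (Fin k)) : complexToRealLIE e x = e x := rfl

end Aux

/-- for sesquilinear `f` and any orthonormal basis `{E_i}` of `ℂ^k`,
`∫_{S^{2k-1}} f(Y,Y) dθ(Y) = (V(S^{2k-1})/k)·Σ_i f(E_i,E_i)`. -/
theorem stmt_2 (k : ℕ) (hk : 1 ≤ k)
    (f : EuclideanSpace ℂ (Fin k) → EuclideanSpace ℂ (Fin k) → ℂ) (hf : Sesquilinear f)
    (E : OrthonormalBasis (Fin k) ℂ (EuclideanSpace ℂ (Fin k))) :
    ∫ Y : sphere (0 : EuclideanSpace ℂ (Fin k)) 1,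
        f (Y : EuclideanSpace ℂ (Fin k)) (Y : EuclideanSpace ℂ (Fin k)) ∂(sphereMeasure k) =
      (((sphereVol k : ℝ) : ℂ) / (k : ℂ)) * ∑ i : Fin k, f (E i) (E i) := by
  classical
  obtain ⟨hadd1, hsmul1, hadd2, hsmul2⟩ := hf
  have hzero1 : ∀ y, f 0 y = 0 := fun y => by
    have h := hsmul1 0 0 y; simpa using h
  have hsumL : ∀ (s : Finset (Fin k)) (g : Fin k → EuclideanSpace ℂ (Fin k)) (y),
      f (∑ i ∈ s, g i) y = ∑ i ∈ s, f (g i) y := by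
    intro s g y
    induction s using Finset.induction with
    | empty => simpa using hzero1 y
    | insert _ _ hnot ih =>
        rw [Finset.sum_insert hnot, hadd1, ih, Finset.sum_insert hnot]
  have hzero2 : ∀ x, f x 0 = 0 := fun x => by
    have h := hsmul2 0 x 0; simpa using h
  have hsumR : ∀ (s : Finset (Fin k)) (g : Fin k → EuclideanSpace ℂ (Fin k)) (x),
      f x (∑ i ∈ s, g i) = ∑ i ∈ s, f x (g i) := by
    intro s g x
    induction s using Finset.induction with
    | empty => simpa using hzero2 x
    | insert _ _ hnot ih =>
        rw [Finset.sum_insert hnot, hadd2, ih, Finset.sum_insert hnot]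
  set c : Fin k → (sphere (0 : EuclideanSpace ℂ (Fin k)) 1) → ℂ :=
    fun i Y => E.repr (Y : EuclideanSpace ℂ (Fin k)) i with hc
  -- pointwise expansion
  have hexp : ∀ Y : sphere (0 : EuclideanSpace ℂ (Fin k)) 1,
      f (Y : EuclideanSpace ℂ (Fin k)) (Y : EuclideanSpace ℂ (Fin k)) =
      ∑ i : Fin k, ∑ j : Fin k, f (E i) (E j) * (c i Y * (starRingEnd ℂ) (c j Y)) := by
    intro Y
    conv_lhs => rw [← E.sum_repr (Y : EuclideanSpace ℂ (Fin k))]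
    rw [hsumL]
    refine Finset.sum_congr rfl fun i _ => ?_
    rw [hsumR]
    refine Finset.sum_congr rfl fun j _ => ?_
    rw [hsmul1, hsmul2]
    simp only [hc]
    ring
  -- continuity
  have hc_cont : ∀ i, Continuous (c i) := by
    intro i
    have h1 : Continuous fun Y : sphere (0 : EuclideanSpace ℂ (Fin k)) 1 =>
        E.repr (Y : EuclideanSpace ℂ (Fin k)) :=
      E.repr.continuous.comp continuous_subtype_val
    exact (continuous_apply i).comp ((PiLp.continuous_ofLp 2 _).comp h1)
  have hcont_ij : ∀ i j, Continuous (fun Y : sphere (0 : EuclideanSpace ℂ (Fin k)) 1 =>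
      c i Y * (starRingEnd ℂ) (c j Y)) := by
    intro i j
    exact (hc_cont i).mul (Complex.continuous_conj.comp (hc_cont j))
  have hfin : IsFiniteMeasure (sphereMeasure k) := by
    unfold sphereMeasure; infer_instance
  have hint : ∀ g : (sphere (0 : EuclideanSpace ℂ (Fin k)) 1) → ℂ, Continuous g →
      Integrable g (sphereMeasure k) := by
    intro g hg
    rw [← integrableOn_univ]
    exact hg.continuousOn.integrableOn_compact isCompact_univ
  set I : Fin k → Fin k → ℂ :=
    fun i j => ∫ Y, c i Y * (starRingEnd ℂ) (c j Y) ∂(sphereMeasure k) with hI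
  -- the conjugated isometries
  have hrepr_e : ∀ (u : EuclideanSpace ℂ (Fin k) ≃ₗᵢ[ℂ] EuclideanSpace ℂ (Fin k))
      (Y : EuclideanSpace ℂ (Fin k)),
      E.repr (((E.repr.trans u).trans E.repr.symm) Y) = u (E.repr Y) := by
    intro u Y
    simp [LinearIsometryEquiv.trans_apply]
  -- off-diagonal vanishing
  have hoff : ∀ i j, i ≠ j → I i j = 0 := by
    intro i j hij
    set u : EuclideanSpace ℂ (Fin k) ≃ₗᵢ[ℂ] EuclideanSpace ℂ (Fin k) :=
      LinearIsometryEquiv.piLpCongrRight 2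
        (fun l => if l = i then LinearIsometryEquiv.neg ℂ else LinearIsometryEquiv.refl ℂ ℂ)
      with hu
    have hu_apply : ∀ (x : EuclideanSpace ℂ (Fin k)) l,
        u x l = if l = i then -x l else x l := by
      intro x l
      rw [hu, LinearIsometryEquiv.piLpCongrRight_apply]
      by_cases h : l = i
      · subst h; simp
      · simp [h]
    set e := (E.repr.trans u).trans E.repr.symm with he
    have h1 := integral_sphMap (complexToRealLIE e)
      (fun Y => c i Y * (starRingEnd ℂ) (c j Y)) (hcont_ij i j)
    have h2 : ∀ Y : sphere (0 : EuclideanSpace ℂ (Fin k)) 1,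
        c i (sphMap (complexToRealLIE e) Y) * (starRingEnd ℂ)
        (c j (sphMap (complexToRealLIE e) Y)) = -(c i Y * (starRingEnd ℂ) (c j Y)) := by
      intro Y
      have hci : c i (sphMap (complexToRealLIE e) Y) = -(c i Y) := by
        show E.repr (e (Y : EuclideanSpace ℂ (Fin k))) i = _
        rw [he, hrepr_e, hu_apply]
        simp [hc]
      have hcj : c j (sphMap (complexToRealLIE e) Y) = c j Y := by
        show E.repr (e (Y : EuclideanSpace ℂ (Fin k))) j = _
        rw [he, hrepr_e, hu_apply]
        simp [hc, Ne.symm hij]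
      rw [hci, hcj]
      ring
    have h3 : I i j = -(I i j) := by
      calc I i j = ∫ Y, c i (sphMap (complexToRealLIE e) Y) * (starRingEnd ℂ)
            (c j (sphMap (complexToRealLIE e) Y)) ∂(sphereMeasure k) := h1.symm
        _ = ∫ Y, -(c i Y * (starRingEnd ℂ) (c j Y)) ∂(sphereMeasure k) := by simp only [h2]
        _ = -(I i j) := integral_neg _
    linear_combination h3 / 2
  -- diagonal terms are all equal
  have hdiagEq : ∀ i j, I i i = I j j := by
    intro i j
    set u : EuclideanSpace ℂ (Fin k) ≃ₗᵢ[ℂ] EuclideanSpace ℂ (Fin k) :=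
      LinearIsometryEquiv.piLpCongrLeft 2 ℂ ℂ (Equiv.swap i j) with hu
    have hu_apply : ∀ (x : EuclideanSpace ℂ (Fin k)) l, u x l = x (Equiv.swap i j l) := by
      intro x l
      rw [hu, LinearIsometryEquiv.piLpCongrLeft_apply]
      simp [Equiv.piCongrLeft'_apply]
    set e := (E.repr.trans u).trans E.repr.symm with he
    have h1 := integral_sphMap (complexToRealLIE e)
      (fun Y => c i Y * (starRingEnd ℂ) (c i Y)) (hcont_ij i i)
    have h2 : ∀ Y : sphere (0 : EuclideanSpace ℂ (Fin k)) 1,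
        c i (sphMap (complexToRealLIE e) Y) * (starRingEnd ℂ)
        (c i (sphMap (complexToRealLIE e) Y)) = c j Y * (starRingEnd ℂ) (c j Y) := by
      intro Y
      have hci : c i (sphMap (complexToRealLIE e) Y) = c j Y := by
        show E.repr (e (Y : EuclideanSpace ℂ (Fin k))) i = _
        rw [he, hrepr_e, hu_apply]
        simp only [hc]
        rw [Equiv.swap_apply_left]
      rw [hci]
    calc I i i = ∫ Y, c i (sphMap (complexToRealLIE e) Y) * (starRingEnd ℂ)
          (c i (sphMap (complexToRealLIE e) Y)) ∂(sphereMeasure k) := h1.symm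
      _ = ∫ Y, c j Y * (starRingEnd ℂ) (c j Y) ∂(sphereMeasure k) := by simp only [h2]
      _ = I j j := rfl
  -- sum of diagonal terms
  have hsumdiag : ∑ i : Fin k, I i i = ((sphereVol k : ℝ) : ℂ) := by
    have h1 : ∑ i : Fin k, I i i
        = ∫ Y, ∑ i : Fin k, c i Y * (starRingEnd ℂ) (c i Y) ∂(sphereMeasure k) :=
      (integral_finset_sum _ (fun i _ => hint _ (hcont_ij i i))).symm
    have h2 : ∀ Y : sphere (0 : EuclideanSpace ℂ (Fin k)) 1,
        ∑ i : Fin k, c i Y * (starRingEnd ℂ) (c i Y) = 1 := by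
      intro Y
      have hY : ‖(Y : EuclideanSpace ℂ (Fin k))‖ = 1 := mem_sphere_zero_iff_norm.1 Y.2
      have h3 : ‖E.repr (Y : EuclideanSpace ℂ (Fin k))‖ = 1 := by
        rw [E.repr.norm_map, hY]
      have h4 : ∑ i : Fin k, ‖E.repr (Y : EuclideanSpace ℂ (Fin k)) i‖ ^ 2 = 1 := by
        have h5 := EuclideanSpace.norm_eq (E.repr (Y : EuclideanSpace ℂ (Fin k)))
        rw [h3] at h5
        have h6 : Real.sqrt (∑ i : Fin k, ‖E.repr (Y : EuclideanSpace ℂ (Fin k)) i‖ ^ 2) = 1 :=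
          h5.symm
        rwa [Real.sqrt_eq_one] at h6
      have h7 : ∀ i : Fin k, c i Y * (starRingEnd ℂ) (c i Y)
          = ((‖E.repr (Y : EuclideanSpace ℂ (Fin k)) i‖ ^ 2 : ℝ) : ℂ) := by
        intro i
        simp only [hc, Complex.mul_conj]
        norm_cast
        rw [Complex.normSq_eq_norm_sq]
      rw [Finset.sum_congr rfl (fun i _ => h7 i), ← Complex.ofReal_sum, h4, Complex.ofReal_one]
    rw [h1]
    simp only [h2]
    rw [integral_const]
    simp [sphereVol, Measure.real]
  -- value of diagonal terms
  have hk0 : (k : ℂ) ≠ 0 := Nat.cast_ne_zero.2 (by omega)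
  have hdiagVal : ∀ i, I i i = ((sphereVol k : ℝ) : ℂ) / (k : ℂ) := by
    intro i
    have h1 : ∑ j : Fin k, I j j = (k : ℂ) * I i i := by
      rw [Finset.sum_congr rfl (fun j _ => hdiagEq j i)]
      simp [Finset.sum_const, Finset.card_univ, mul_comm]
    rw [eq_div_iff hk0, ← hsumdiag, h1]
    ring
  -- assemble
  calc ∫ Y : sphere (0 : EuclideanSpace ℂ (Fin k)) 1,
        f (Y : EuclideanSpace ℂ (Fin k)) (Y : EuclideanSpace ℂ (Fin k)) ∂(sphereMeasure k)
      = ∫ Y : sphere (0 : EuclideanSpace ℂ (Fin k)) 1, ∑ i : Fin k, ∑ j : Fin k,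
          f (E i) (E j) * (c i Y * (starRingEnd ℂ) (c j Y)) ∂(sphereMeasure k) := by
        simp only [hexp]
    _ = ∑ i : Fin k, ∑ j : Fin k, f (E i) (E j) * I i j := by
        rw [integral_finset_sum _ (fun i _ => integrable_finset_sum _
          (fun j _ => (hint _ (hcont_ij i j)).const_mul _))]
        refine Finset.sum_congr rfl fun i _ => ?_
        rw [integral_finset_sum _ (fun j _ => (hint _ (hcont_ij i j)).const_mul _)]
        exact Finset.sum_congr rfl fun j _ => integral_const_mul _ _
    _ = ∑ i : Fin k, f (E i) (E i) * I i i := by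
        refine Finset.sum_congr rfl fun i _ => ?_
        rw [Finset.sum_eq_single i]
        · intro j _ hji
          rw [hoff i j (Ne.symm hji), mul_zero]
        · intro h; exact absurd (Finset.mem_univ i) h
    _ = (((sphereVol k : ℝ) : ℂ) / (k : ℂ)) * ∑ i : Fin k, f (E i) (E i) := by
        rw [Finset.mul_sum]
        refine Finset.sum_congr rfl fun i _ => ?_
        rw [hdiagVal i]
        ring
end

section
/- Let f : ℂ^k × ℂ^k → ℂ be sesquilinear. Then for every orthonormal basis {E_1,…,E_k} of ℂ^k, ∫_{S^{2k−1}} ∫_{S^{2k−1}} |⟨X,Y⟩|² · f(X,X) dθ(X) dθ(Y) = (V(S^{2k−1})²/k²) · Σ_{i=1}^k f(E_i,E_i). -/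
open MeasureTheory Metric

open Set
open scoped Pointwise ComplexConjugate

namespace Stmt7Aux

open Set
open scoped Pointwise ComplexConjugate

variable {k : ℕ}

instance : IsFiniteMeasure (sphereMeasure k) := by
  unfold sphereMeasure; infer_instance

noncomputable def realLIE (U : EuclideanSpace ℂ (Fin k) ≃ₗᵢ[ℂ] EuclideanSpace ℂ (Fin k)) :
    EuclideanSpace ℂ (Fin k) ≃ₗᵢ[ℝ] EuclideanSpace ℂ (Fin k) :=
  ⟨U.toLinearEquiv.restrictScalars ℝ, U.norm_map⟩

lemma volume_mp (U : EuclideanSpace ℂ (Fin k) ≃ₗᵢ[ℂ] EuclideanSpace ℂ (Fin k)) :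
    MeasurePreserving U (volume : Measure (EuclideanSpace ℂ (Fin k))) volume :=
  (realLIE U).measurePreserving

noncomputable def sMap (U : EuclideanSpace ℂ (Fin k) ≃ₗᵢ[ℂ] EuclideanSpace ℂ (Fin k)) :
    sphere (0 : EuclideanSpace ℂ (Fin k)) 1 → sphere (0 : EuclideanSpace ℂ (Fin k)) 1 := fun x =>
  ⟨U x, by
    have hx : ‖(x : EuclideanSpace ℂ (Fin k))‖ = 1 := mem_sphere_zero_iff_norm.mp x.2
    exact mem_sphere_zero_iff_norm.mpr (by rw [U.norm_map, hx])⟩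

noncomputable def sHomeo (U : EuclideanSpace ℂ (Fin k) ≃ₗᵢ[ℂ] EuclideanSpace ℂ (Fin k)) :
    sphere (0 : EuclideanSpace ℂ (Fin k)) 1 ≃ₜ sphere (0 : EuclideanSpace ℂ (Fin k)) 1 where
  toFun := sMap U
  invFun := sMap U.symm
  left_inv x := Subtype.ext (U.symm_apply_apply x)
  right_inv x := Subtype.ext (U.apply_symm_apply x)
  continuous_toFun := Continuous.subtype_mk (U.continuous.comp continuous_subtype_val) _
  continuous_invFun := Continuous.subtype_mk (U.symm.continuous.comp continuous_subtype_val) _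

lemma sMap_mp (U : EuclideanSpace ℂ (Fin k) ≃ₗᵢ[ℂ] EuclideanSpace ℂ (Fin k)) :
    MeasurePreserving (sMap U) (sphereMeasure k) (sphereMeasure k) := by
  have hcont : Continuous (sMap U) := (sHomeo U).continuous_toFun
  refine ⟨hcont.measurable, ?_⟩
  refine Measure.ext fun s hs => ?_
  rw [Measure.map_apply hcont.measurable hs]
  unfold sphereMeasure
  rw [Measure.toSphere_apply' _ (hcont.measurable hs), Measure.toSphere_apply' _ hs]
  congr 1
  have himg : (Subtype.val '' (sMap U ⁻¹' s)) = U ⁻¹' (Subtype.val '' s) := by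
    ext x
    constructor
    · rintro ⟨y, hy, rfl⟩
      exact ⟨sMap U y, hy, rfl⟩
    · rintro ⟨z, hz, hzx⟩
      have hxs : x ∈ sphere (0 : EuclideanSpace ℂ (Fin k)) 1 := by
        have : ‖(z : EuclideanSpace ℂ (Fin k))‖ = 1 := mem_sphere_zero_iff_norm.mp z.2
        rw [hzx] at this
        rw [U.norm_map] at this
        exact mem_sphere_zero_iff_norm.mpr this
      refine ⟨⟨x, hxs⟩, ?_, rfl⟩
      show sMap U ⟨x, hxs⟩ ∈ s
      have : sMap U ⟨x, hxs⟩ = z := Subtype.ext hzx.symm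
      rwa [this]
  rw [himg]
  have hsmul : Ioo (0:ℝ) 1 • (U ⁻¹' (Subtype.val '' s))
      = U ⁻¹' (Ioo (0:ℝ) 1 • (Subtype.val '' s)) := by
    ext z
    simp only [Set.mem_smul, Set.mem_preimage]
    constructor
    · rintro ⟨r, hr, b, hb, rfl⟩
      refine ⟨r, hr, U b, hb, ?_⟩
      rw [← algebraMap_smul ℂ r b, _root_.map_smul, algebraMap_smul]
    · rintro ⟨r, hr, b, hb, hz⟩
      refine ⟨r, hr, U.symm b, by simpa using hb, ?_⟩
      apply U.injective
      rw [← algebraMap_smul ℂ r (U.symm b), _root_.map_smul, algebraMap_smul,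
        U.apply_symm_apply, hz]
  rw [hsmul]
  exact (volume_mp U).measure_preimage_emb U.toHomeomorph.measurableEmbedding _

/-- The second-moment integral. -/
noncomputable def J (u v : EuclideanSpace ℂ (Fin k)) : ℂ :=
  ∫ X : sphere (0 : EuclideanSpace ℂ (Fin k)) 1,
    (inner ℂ u (X : EuclideanSpace ℂ (Fin k)) : ℂ) *
      conj (inner ℂ v (X : EuclideanSpace ℂ (Fin k)) : ℂ) ∂(sphereMeasure k)

lemma integrable_cont {g : sphere (0 : EuclideanSpace ℂ (Fin k)) 1 → ℂ} (hg : Continuous g) :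
    Integrable g (sphereMeasure k) :=
  hg.integrable_of_hasCompactSupport ((isClosed_tsupport g).isCompact)

lemma cont_Jf (u v : EuclideanSpace ℂ (Fin k)) :
    Continuous (fun X : sphere (0 : EuclideanSpace ℂ (Fin k)) 1 =>
      (inner ℂ u (X : EuclideanSpace ℂ (Fin k)) : ℂ) *
        conj (inner ℂ v (X : EuclideanSpace ℂ (Fin k)) : ℂ)) := by
  apply Continuous.mul
  · exact (continuous_const.inner continuous_subtype_val)
  · exact continuous_star.comp (continuous_const.inner continuous_subtype_val)

lemma J_unitary (U : EuclideanSpace ℂ (Fin k) ≃ₗᵢ[ℂ] EuclideanSpace ℂ (Fin k))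
    (u v : EuclideanSpace ℂ (Fin k)) : J (U u) (U v) = J u v := by
  unfold J
  rw [← (sMap_mp U).integral_comp (sHomeo U).measurableEmbedding
    (fun X : sphere (0 : EuclideanSpace ℂ (Fin k)) 1 =>
      (inner ℂ (U u) (X : EuclideanSpace ℂ (Fin k)) : ℂ) *
        conj (inner ℂ (U v) (X : EuclideanSpace ℂ (Fin k)) : ℂ))]
  congr 1
  funext X
  show (inner ℂ (U u) (U (X : EuclideanSpace ℂ (Fin k))) : ℂ) *
      conj (inner ℂ (U v) (U (X : EuclideanSpace ℂ (Fin k))) : ℂ) = _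
  rw [LinearIsometryEquiv.inner_map_map, LinearIsometryEquiv.inner_map_map]

lemma J_neg_left (u v : EuclideanSpace ℂ (Fin k)) : J (-u) v = -J u v := by
  unfold J
  rw [← integral_neg]
  congr 1
  funext X
  rw [inner_neg_left]
  ring

lemma sum_J (B : OrthonormalBasis (Fin k) ℂ (EuclideanSpace ℂ (Fin k))) :
    ∑ i, J (B i) (B i) = (((sphereMeasure k) univ).toReal : ℂ) := by
  unfold J
  rw [← integral_finset_sum _ (fun i _ => integrable_cont (cont_Jf _ _))]
  have h1 : ∀ X : sphere (0 : EuclideanSpace ℂ (Fin k)) 1,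
      (∑ i, (inner ℂ (B i) (X : EuclideanSpace ℂ (Fin k)) : ℂ) *
        conj (inner ℂ (B i) (X : EuclideanSpace ℂ (Fin k)) : ℂ)) = 1 := by
    intro X
    have hx : ‖(X : EuclideanSpace ℂ (Fin k))‖ = 1 := mem_sphere_zero_iff_norm.mp X.2
    have hterm : ∀ i, (inner ℂ (B i) (X : EuclideanSpace ℂ (Fin k)) : ℂ) *
        conj (inner ℂ (B i) (X : EuclideanSpace ℂ (Fin k)) : ℂ)
        = (inner ℂ ((X : EuclideanSpace ℂ (Fin k))) (B i) : ℂ) *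
          (inner ℂ (B i) ((X : EuclideanSpace ℂ (Fin k))) : ℂ) := by
      intro i; rw [inner_conj_symm]; ring
    simp_rw [hterm]
    rw [B.sum_inner_mul_inner]
    rw [inner_self_eq_norm_sq_to_K, hx]
    norm_num
  simp_rw [h1]
  simp [integral_const, Complex.real_smul, Measure.real]

lemma exists_unitary (hk : 1 ≤ k) {u v : EuclideanSpace ℂ (Fin k)}
    (hu : ‖u‖ = 1) (hv : ‖v‖ = 1) :
    ∃ U : EuclideanSpace ℂ (Fin k) ≃ₗᵢ[ℂ] EuclideanSpace ℂ (Fin k), U u = v := by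
  haveI : NeZero k := ⟨by omega⟩
  have hcard : Module.finrank ℂ (EuclideanSpace ℂ (Fin k)) = Fintype.card (Fin k) :=
    finrank_euclideanSpace
  have horth : ∀ (w : EuclideanSpace ℂ (Fin k)), ‖w‖ = 1 →
      Orthonormal ℂ (({0} : Set (Fin k)).restrict (fun _ => w)) := by
    intro w hw
    constructor
    · intro i; exact hw
    · intro i j hij
      exfalso
      apply hij
      apply Subtype.ext
      have hi := i.2
      have hj := j.2
      simp only [Set.mem_singleton_iff] at hi hj
      rw [hi, hj]
  obtain ⟨Bu, hBu⟩ := (horth u hu).exists_orthonormalBasis_extension_of_card_eq hcard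
  obtain ⟨Bv, hBv⟩ := (horth v hv).exists_orthonormalBasis_extension_of_card_eq hcard
  refine ⟨Bu.repr.trans Bv.repr.symm, ?_⟩
  have h1 : Bu 0 = u := hBu 0 rfl
  have h2 : Bv 0 = v := hBv 0 rfl
  show Bv.repr.symm (Bu.repr u) = v
  rw [← h1, ← h2, OrthonormalBasis.repr_self, OrthonormalBasis.repr_symm_single]

lemma J_diag (hk : 1 ≤ k) {u : EuclideanSpace ℂ (Fin k)} (hu : ‖u‖ = 1)
    (B : OrthonormalBasis (Fin k) ℂ (EuclideanSpace ℂ (Fin k))) :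
    J u u = ((((sphereMeasure k) univ).toReal : ℂ)) / (k : ℂ) := by
  have heq : ∀ i : Fin k, J (B i) (B i) = J u u := by
    intro i
    obtain ⟨U, hU⟩ := exists_unitary hk hu (B.orthonormal.1 i)
    rw [← hU, J_unitary]
  have hsum := sum_J B
  rw [Finset.sum_congr rfl (fun i _ => heq i), Finset.sum_const, Finset.card_univ,
    Fintype.card_fin, nsmul_eq_mul] at hsum
  have hk0 : (k : ℂ) ≠ 0 := by
    simp only [ne_eq, Nat.cast_eq_zero]
    omega
  field_simp [hk0] at hsum ⊢
  rw [← hsum]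

lemma J_offdiag (B : OrthonormalBasis (Fin k) ℂ (EuclideanSpace ℂ (Fin k)))
    {i j : Fin k} (hij : i ≠ j) : J (B i) (B j) = 0 := by
  set K : Submodule ℂ (EuclideanSpace ℂ (Fin k)) := (ℂ ∙ (B i))ᗮ with hK
  have hBi : K.reflection (B i) = -(B i) := by
    apply Submodule.reflection_mem_subspace_orthogonalComplement_eq_neg
    exact Submodule.le_orthogonal_orthogonal _ (Submodule.mem_span_singleton_self _)
  have hBj : K.reflection (B j) = B j := by
    apply Submodule.reflection_mem_subspace_eq_self
    rw [hK, Submodule.mem_orthogonal_singleton_iff_inner_right]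
    exact B.orthonormal.2 hij
  have h := J_unitary (K.reflection) (B i) (B j)
  rw [hBi, hBj, J_neg_left] at h
  have h2 : (2:ℂ) * J (B i) (B j) = 0 := by linear_combination -h
  simpa using h2

lemma sesq_expand (f : EuclideanSpace ℂ (Fin k) → EuclideanSpace ℂ (Fin k) → ℂ)
    (hf : Sesquilinear f) (E : OrthonormalBasis (Fin k) ℂ (EuclideanSpace ℂ (Fin k)))
    (x : EuclideanSpace ℂ (Fin k)) :
    f x x = ∑ i, ∑ j, (inner ℂ (E i) x : ℂ) * conj (inner ℂ (E j) x : ℂ) * f (E i) (E j) := by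
  obtain ⟨ha1, hs1, ha2, hs2⟩ := hf
  have lin1 : ∀ (z y : EuclideanSpace ℂ (Fin k)),
      f z y = ∑ i, (inner ℂ (E i) z : ℂ) * f (E i) y := by
    intro z y
    let F : EuclideanSpace ℂ (Fin k) →ₗ[ℂ] ℂ :=
      { toFun := fun w => f w y
        map_add' := fun a b => ha1 a b y
        map_smul' := fun c a => by simpa using hs1 c a y }
    have hz : f z y = F z := rfl
    rw [hz]
    conv_lhs => rw [← E.sum_repr z]
    rw [map_sum]
    refine Finset.sum_congr rfl fun i _ => ?_
    rw [_root_.map_smul]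
    simp [F, E.repr_apply_apply]
  have lin2 : ∀ (u z : EuclideanSpace ℂ (Fin k)),
      f u z = ∑ j, conj (inner ℂ (E j) z : ℂ) * f u (E j) := by
    intro u z
    let G : EuclideanSpace ℂ (Fin k) →ₗ[ℂ] ℂ :=
      { toFun := fun w => conj (f u w)
        map_add' := fun a b => by
          show conj (f u (a + b)) = conj (f u a) + conj (f u b)
          rw [ha2]; exact map_add (starRingEnd ℂ) _ _
        map_smul' := fun c a => by
          show conj (f u (c • a)) = (RingHom.id ℂ) c • conj (f u a)
          rw [hs2]; simp }
    have hz : f u z = conj (G z) := by simp [G]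
    rw [hz]
    conv_lhs => rw [← E.sum_repr z]
    rw [map_sum, map_sum]
    refine Finset.sum_congr rfl fun j _ => ?_
    rw [_root_.map_smul]
    simp [G, E.repr_apply_apply]
  rw [lin1 x x]
  refine Finset.sum_congr rfl fun i _ => ?_
  rw [lin2 (E i) x, Finset.mul_sum]
  refine Finset.sum_congr rfl fun j _ => ?_
  ring

lemma cont_diag (f : EuclideanSpace ℂ (Fin k) → EuclideanSpace ℂ (Fin k) → ℂ)
    (hf : Sesquilinear f) (E : OrthonormalBasis (Fin k) ℂ (EuclideanSpace ℂ (Fin k))) :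
    Continuous fun x : EuclideanSpace ℂ (Fin k) => f x x := by
  have hfx : (fun x : EuclideanSpace ℂ (Fin k) => f x x)
      = fun x => ∑ i, ∑ j, (inner ℂ (E i) x : ℂ) * conj (inner ℂ (E j) x : ℂ) * f (E i) (E j) :=
    funext (sesq_expand f hf E)
  rw [hfx]
  apply continuous_finset_sum
  intro i _
  apply continuous_finset_sum
  intro j _
  exact ((continuous_const.inner continuous_id).mul
    (continuous_star.comp (continuous_const.inner continuous_id))).mul continuous_const

lemma norm_sq_complex (z : ℂ) : ((‖z‖ : ℂ))^2 = z * conj z := by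
  rw [Complex.mul_conj, Complex.normSq_eq_norm_sq]
  push_cast
  ring

end Stmt7Aux

open Stmt7Aux Set
open scoped ComplexConjugate

/-- for sesquilinear `f` and any orthonormal basis `{E_i}` of `ℂ^k`,
`∫∫_{S^{2k-1}×S^{2k-1}} |⟨X,Y⟩|²·f(X,X) dθ(X)dθ(Y) = (V(S^{2k-1})²/k²)·Σ_i f(E_i,E_i)`. -/
theorem stmt_7 (k : ℕ) (hk : 1 ≤ k)
    (f : EuclideanSpace ℂ (Fin k) → EuclideanSpace ℂ (Fin k) → ℂ) (hf : Sesquilinear f)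
    (E : OrthonormalBasis (Fin k) ℂ (EuclideanSpace ℂ (Fin k))) :
    ∫ Y : sphere (0 : EuclideanSpace ℂ (Fin k)) 1,
      ∫ X : sphere (0 : EuclideanSpace ℂ (Fin k)) 1,
        ((‖(inner ℂ (Y : EuclideanSpace ℂ (Fin k)) (X : EuclideanSpace ℂ (Fin k)) : ℂ)‖ : ℂ)) ^ 2 *
          f (X : EuclideanSpace ℂ (Fin k)) (X : EuclideanSpace ℂ (Fin k))
        ∂(sphereMeasure k) ∂(sphereMeasure k) =
      (((sphereVol k : ℝ) : ℂ) ^ 2 / (k : ℂ) ^ 2) * ∑ i : Fin k, f (E i) (E i) := by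
  classical
  have hk0 : (k : ℂ) ≠ 0 := by
    simp only [ne_eq, Nat.cast_eq_zero]; omega
  have hcd : Continuous fun x : EuclideanSpace ℂ (Fin k) => f x x := cont_diag f hf E
  -- Fubini
  have hcont : Continuous (Function.uncurry fun (Y X : sphere (0 : EuclideanSpace ℂ (Fin k)) 1) =>
      ((‖(inner ℂ (Y : EuclideanSpace ℂ (Fin k)) (X : EuclideanSpace ℂ (Fin k)) : ℂ)‖ : ℂ)) ^ 2 *
        f (X : EuclideanSpace ℂ (Fin k)) (X : EuclideanSpace ℂ (Fin k))) := by
    unfold Function.uncurry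
    apply Continuous.mul
    · apply Continuous.pow
      exact Complex.continuous_ofReal.comp
        (Continuous.norm ((continuous_subtype_val.comp continuous_fst).inner
          (continuous_subtype_val.comp continuous_snd)))
    · exact hcd.comp (continuous_subtype_val.comp continuous_snd)
  have hint : Integrable (Function.uncurry fun (Y X : sphere (0 : EuclideanSpace ℂ (Fin k)) 1) =>
      ((‖(inner ℂ (Y : EuclideanSpace ℂ (Fin k)) (X : EuclideanSpace ℂ (Fin k)) : ℂ)‖ : ℂ)) ^ 2 *
        f (X : EuclideanSpace ℂ (Fin k)) (X : EuclideanSpace ℂ (Fin k))) ((sphereMeasure k).prod (sphereMeasure k)) :=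
    hcont.integrable_of_hasCompactSupport ((isClosed_tsupport _).isCompact)
  rw [integral_integral_swap hint]
  -- inner integral over Y
  have hXpt : ∀ X : sphere (0 : EuclideanSpace ℂ (Fin k)) 1,
      (∫ Y : sphere (0 : EuclideanSpace ℂ (Fin k)) 1,
        ((‖(inner ℂ (Y : EuclideanSpace ℂ (Fin k)) (X : EuclideanSpace ℂ (Fin k)) : ℂ)‖ : ℂ)) ^ 2 *
          f (X : EuclideanSpace ℂ (Fin k)) (X : EuclideanSpace ℂ (Fin k)) ∂(sphereMeasure k))
      = (((sphereMeasure k univ).toReal : ℂ) / (k : ℂ)) *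
          f (X : EuclideanSpace ℂ (Fin k)) (X : EuclideanSpace ℂ (Fin k)) := by
    intro X
    rw [MeasureTheory.integral_mul_const]
    have hYpt : ∀ Y : sphere (0 : EuclideanSpace ℂ (Fin k)) 1,
        ((‖(inner ℂ (Y : EuclideanSpace ℂ (Fin k)) (X : EuclideanSpace ℂ (Fin k)) : ℂ)‖ : ℂ)) ^ 2
        = (inner ℂ (X : EuclideanSpace ℂ (Fin k)) (Y : EuclideanSpace ℂ (Fin k)) : ℂ) *
          conj (inner ℂ (X : EuclideanSpace ℂ (Fin k)) (Y : EuclideanSpace ℂ (Fin k)) : ℂ) := by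
      intro Y
      rw [norm_inner_symm]
      exact norm_sq_complex _
    simp_rw [hYpt]
    have hXn : ‖(X : EuclideanSpace ℂ (Fin k))‖ = 1 := mem_sphere_zero_iff_norm.mp X.2
    have := J_diag hk hXn E
    unfold J at this
    rw [this]
  rw [integral_congr_ae (Filter.Eventually.of_forall hXpt), MeasureTheory.integral_const_mul]
  -- the diagonal integral
  have hdiag : (∫ X : sphere (0 : EuclideanSpace ℂ (Fin k)) 1,
      f (X : EuclideanSpace ℂ (Fin k)) (X : EuclideanSpace ℂ (Fin k)) ∂(sphereMeasure k))
      = (((sphereMeasure k univ).toReal : ℂ) / (k : ℂ)) * ∑ i : Fin k, f (E i) (E i) := by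
    have hrw : ∀ X : sphere (0 : EuclideanSpace ℂ (Fin k)) 1,
        f (X : EuclideanSpace ℂ (Fin k)) (X : EuclideanSpace ℂ (Fin k))
        = ∑ i, ∑ j, (inner ℂ (E i) (X : EuclideanSpace ℂ (Fin k)) : ℂ) *
            conj (inner ℂ (E j) (X : EuclideanSpace ℂ (Fin k)) : ℂ) * f (E i) (E j) :=
      fun X => sesq_expand f hf E _
    rw [integral_congr_ae (Filter.Eventually.of_forall hrw)]
    have hcij : ∀ i j : Fin k, Continuous (fun X : sphere (0 : EuclideanSpace ℂ (Fin k)) 1 =>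
        (inner ℂ (E i) (X : EuclideanSpace ℂ (Fin k)) : ℂ) *
          conj (inner ℂ (E j) (X : EuclideanSpace ℂ (Fin k)) : ℂ) * f (E i) (E j)) :=
      fun i j => (cont_Jf (E i) (E j)).mul continuous_const
    rw [integral_finset_sum _ (fun i _ => integrable_cont (by
      exact continuous_finset_sum _ (fun j _ => hcij i j)))]
    have hterm : ∀ i : Fin k, (∫ X : sphere (0 : EuclideanSpace ℂ (Fin k)) 1,
        ∑ j, (inner ℂ (E i) (X : EuclideanSpace ℂ (Fin k)) : ℂ) *
          conj (inner ℂ (E j) (X : EuclideanSpace ℂ (Fin k)) : ℂ) * f (E i) (E j) ∂(sphereMeasure k))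
        = (((sphereMeasure k univ).toReal : ℂ) / (k : ℂ)) * f (E i) (E i) := by
      intro i
      rw [integral_finset_sum _ (fun j _ => integrable_cont (hcij i j))]
      have hJval : ∀ j : Fin k, (∫ X : sphere (0 : EuclideanSpace ℂ (Fin k)) 1,
          (inner ℂ (E i) (X : EuclideanSpace ℂ (Fin k)) : ℂ) *
            conj (inner ℂ (E j) (X : EuclideanSpace ℂ (Fin k)) : ℂ) * f (E i) (E j) ∂(sphereMeasure k))
          = (if i = j then (((sphereMeasure k univ).toReal : ℂ) / (k : ℂ)) else 0) * f (E i) (E j) := by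
        intro j
        rw [MeasureTheory.integral_mul_const]
        congr 1
        by_cases hij : i = j
        · subst hij
          simp only [if_pos rfl]
          have := J_diag hk (E.orthonormal.1 i) E
          unfold J at this
          exact this
        · simp only [if_neg hij]
          have := J_offdiag E hij
          unfold J at this
          exact this
      simp_rw [hJval]
      rw [Finset.sum_eq_single i]
      · simp
      · intro j _ hji
        simp [Ne.symm hji]
      · intro h; exact absurd (Finset.mem_univ i) h
    rw [Finset.sum_congr rfl (fun i _ => hterm i), ← Finset.mul_sum]
  rw [hdiag]
  have hV : ((sphereVol k : ℝ) : ℂ) = ((sphereMeasure k univ).toReal : ℂ) := by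
    unfold sphereVol; norm_num
  rw [hV]
  field_simp
end

section
/- Let 1 ≤ k ≤ n, let g : (ℂ^n)^4 → ℂ be quadrilinear of curvature type satisfying the Kähler-type symmetries, and let Σ ⊆ ℂ^n be a k-dimensional complex subspace that minimizes (or maximizes) s among all k-dimensional complex subspaces of ℂ^n. Then for every orthonormal basis {E_1,…,E_k} of Σ, every Y ∈ Σ, and every Z ∈ Σ^⊥ (the orthogonal complement of Σ), one has Σ_{i=1}^k g(E_i,E_i,Y,Z) = 0 and Σ_{i=1}^k g(E_i,E_i,Z,Y) = 0. -/
/-- `g` is quadrilinear of curvature type: linear in the first and third variables,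
conjugate-linear in the second and fourth. -/
def CurvatureType {H : Type*} [AddCommGroup H] [Module ℂ H] (g : H → H → H → H → ℂ) : Prop :=
  (∀ x x' y z w, g (x + x') y z w = g x y z w + g x' y z w) ∧
  (∀ (c : ℂ) (x y z w : H), g (c • x) y z w = c * g x y z w) ∧
  (∀ x y y' z w, g x (y + y') z w = g x y z w + g x y' z w) ∧
  (∀ (c : ℂ) (x y z w : H), g x (c • y) z w = (starRingEnd ℂ) c * g x y z w) ∧
  (∀ x y z z' w, g x y (z + z') w = g x y z w + g x y z' w) ∧
  (∀ (c : ℂ) (x y z w : H), g x y (c • z) w = c * g x y z w) ∧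
  (∀ x y z w w', g x y z (w + w') = g x y z w + g x y z w') ∧
  (∀ (c : ℂ) (x y z w : H), g x y z (c • w) = (starRingEnd ℂ) c * g x y z w)

/-- The Kähler-type symmetries of a curvature-type quadrilinear map. -/
def KahlerSymmetries {H : Type*} [AddCommGroup H] [Module ℂ H] (g : H → H → H → H → ℂ) : Prop :=
  (∀ x y z w, g x y z w = g z y x w) ∧
  (∀ x y z w, g x y z w = (starRingEnd ℂ) (g y x w z))

open scoped ComplexInnerProductSpace

lemma aux_real {c C : ℝ} (hC : 0 ≤ C)
    (h : ∀ t : ℝ, 0 ≤ Real.cos t * Real.sin t * c + Real.sin t ^ 2 * C) : c = 0 := by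
  by_contra hc
  have hc' : 0 < |c| := abs_pos.mpr hc
  set δ : ℝ := min 1 (|c| / (2 * C + 2)) with hδdef
  have hδpos : 0 < δ := lt_min one_pos (by positivity)
  have hδ1 : δ ≤ 1 := min_le_left _ _
  have hδ2 : δ ≤ |c| / (2 * C + 2) := min_le_right _ _
  have hsinpos : 0 < Real.sin δ :=
    Real.sin_pos_of_pos_of_lt_pi hδpos (lt_of_le_of_lt hδ1 (by linarith [Real.pi_gt_three]))
  have hsinle : Real.sin δ ≤ δ := Real.sin_le hδpos.le
  have hcos : 1 / 2 ≤ Real.cos δ := by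
    have h1 := Real.one_sub_sq_div_two_le_cos (x := δ)
    nlinarith
  have key : Real.cos δ * Real.sin δ * |c| ≤ Real.sin δ ^ 2 * C := by
    rcases le_or_gt c 0 with h1 | h1
    · have h2 := h δ
      rw [abs_of_nonpos h1]
      nlinarith
    · have h2 := h (-δ)
      rw [Real.cos_neg, Real.sin_neg] at h2
      rw [abs_of_pos h1]
      nlinarith
  have h2 : Real.cos δ * |c| ≤ Real.sin δ * C := by
    have h3 : Real.cos δ * |c| * Real.sin δ ≤ Real.sin δ * C * Real.sin δ := by nlinarith
    exact le_of_mul_le_mul_right h3 hsinpos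
  have h4 : Real.sin δ * C ≤ (|c| / (2 * C + 2)) * C := by nlinarith
  have h5 : (|c| / (2 * C + 2)) * C < |c| / 2 := by
    rw [div_mul_eq_mul_div, div_lt_div_iff₀ (by positivity) (by norm_num)]
    nlinarith
  nlinarith

lemma scal_re_le (r : ℝ) (z : ℂ) (hr : |r| ≤ 1) : ((r : ℂ) * z).re ≤ ‖z‖ := by
  rw [Complex.re_ofReal_mul]
  calc r * z.re ≤ |r * z.re| := le_abs_self _
    _ = |r| * |z.re| := abs_mul _ _
    _ ≤ 1 * ‖z‖ :=
      mul_le_mul hr (Complex.abs_re_le_norm z) (abs_nonneg _) one_pos.le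
    _ = ‖z‖ := one_mul _

lemma CT.expand {H : Type*} [AddCommGroup H] [Module ℂ H] {g : H → H → H → H → ℂ}
    (hg : CurvatureType g) {k : ℕ} (e : Fin k → H) (W : H) (i₀ : Fin k) (a b : ℝ)
    (v : H) (hv : v = (a : ℂ) • e i₀ + (b : ℂ) • W)
    (F : Fin k → H) (hF : ∀ i, F i = if i = i₀ then v else e i) :
    (∑ i, ∑ j, g (F i) (F i) (F j) (F j)) =
      (∑ i, ∑ j, g (e i) (e i) (e j) (e j))
      + ((a : ℂ) * b) * ((∑ i, g (e i) (e i) (e i₀) W) + (∑ i, g (e i) (e i) W (e i₀))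
          + (∑ i, g (e i₀) W (e i) (e i)) + (∑ i, g W (e i₀) (e i) (e i)))
      + ((a : ℂ) ^ 2 - 1) * ((∑ i, g (e i₀) (e i₀) (e i) (e i))
          + (∑ i, g (e i) (e i) (e i₀) (e i₀)))
      + (b : ℂ) ^ 2 * ((∑ i, g W W (e i) (e i)) + (∑ i, g (e i) (e i) W W)
          - g W W (e i₀) (e i₀) - g (e i₀) (e i₀) W W)
      + ((a : ℂ) ^ 2 - 1) ^ 2 * g (e i₀) (e i₀) (e i₀) (e i₀)
      + ((a : ℂ) * b) * ((a : ℂ) ^ 2 - 1) * (g (e i₀) W (e i₀) (e i₀) + g W (e i₀) (e i₀) (e i₀)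
          + g (e i₀) (e i₀) (e i₀) W + g (e i₀) (e i₀) W (e i₀))
      + (a : ℂ) ^ 2 * (b : ℂ) ^ 2 * (g (e i₀) (e i₀) W W + g W W (e i₀) (e i₀)
          + g (e i₀) W (e i₀) W + g (e i₀) W W (e i₀) + g W (e i₀) (e i₀) W + g W (e i₀) W (e i₀))
      + ((a : ℂ) * b) * (b : ℂ) ^ 2 * (g (e i₀) W W W + g W (e i₀) W W
          + g W W (e i₀) W + g W W W (e i₀))
      + (b : ℂ) ^ 4 * g W W W W := by
  classical
  have hadd1 := hg.1
  have hsmul1 := hg.2.1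
  have hadd2 := hg.2.2.1
  have hsmul2 := hg.2.2.2.1
  have hadd3 := hg.2.2.2.2.1
  have hsmul3 := hg.2.2.2.2.2.1
  have hadd4 := hg.2.2.2.2.2.2.1
  have hsmul4 := hg.2.2.2.2.2.2.2
  have h34 : ∀ x y : H, g x y v v = (a : ℂ) ^ 2 * g x y (e i₀) (e i₀)
      + (a : ℂ) * b * g x y (e i₀) W + (a : ℂ) * b * g x y W (e i₀)
      + (b : ℂ) ^ 2 * g x y W W := by
    intro x y
    rw [hv]
    simp only [hadd3, hsmul3, hadd4, hsmul4, Complex.conj_ofReal]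
    ring
  have h12 : ∀ z w : H, g v v z w = (a : ℂ) ^ 2 * g (e i₀) (e i₀) z w
      + (a : ℂ) * b * g (e i₀) W z w + (a : ℂ) * b * g W (e i₀) z w
      + (b : ℂ) ^ 2 * g W W z w := by
    intro z w
    rw [hv]
    simp only [hadd1, hsmul1, hadd2, hsmul2, Complex.conj_ofReal]
    ring
  have hFsum : ∀ f : H → ℂ, (∑ i, f (F i)) = (∑ i, f (e i)) + f v - f (e i₀) := by
    intro f
    have hupd : (fun i => f (F i)) = Function.update (fun i => f (e i)) i₀ (f v) := by
      funext i
      by_cases hi : i = i₀ <;> simp [hF, hi, Function.update]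
    rw [show (∑ i, f (F i)) = ∑ i, (fun i => f (F i)) i from rfl, hupd,
      Finset.sum_update_of_mem (Finset.mem_univ i₀)]
    rw [Finset.sdiff_singleton_eq_erase, Finset.sum_erase_eq_sub (Finset.mem_univ i₀)]
    ring
  have hinner : ∀ x : H, (∑ j, g x x (F j) (F j))
      = (∑ j, g x x (e j) (e j)) + g x x v v - g x x (e i₀) (e i₀) := fun x =>
    hFsum (fun y => g x x y y)
  have h1 : (∑ i, ∑ j, g (F i) (F i) (F j) (F j))
      = (∑ i, ∑ j, g (e i) (e i) (F j) (F j))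
        + (∑ j, g v v (F j) (F j)) - (∑ j, g (e i₀) (e i₀) (F j) (F j)) :=
    hFsum (fun x => ∑ j, g x x (F j) (F j))
  rw [h1]
  simp only [hinner]
  simp only [h12, h34]
  simp only [Finset.sum_add_distrib, Finset.sum_sub_distrib, ← Finset.mul_sum]
  ring

set_option maxHeartbeats 1000000 in
lemma first_order {H : Type*} [NormedAddCommGroup H] [InnerProductSpace ℂ H] {k : ℕ}
    (g : H → H → H → H → ℂ) (hg : CurvatureType g)
    (e : Fin k → H) (he : Orthonormal ℂ e)
    (W : H) (hW : ‖W‖ = 1) (hWe : ∀ i, ⟪e i, W⟫ = 0) (i₀ : Fin k)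
    (hmin : ∀ Q : Submodule ℂ H, Module.finrank ℂ Q = k →
      ∀ E' : OrthonormalBasis (Fin k) ℂ Q,
      (∑ i, ∑ j, g (e i) (e i) (e j) (e j)).re ≤
        (∑ i, ∑ j, g (E' i) (E' i) (E' j) (E' j)).re) :
    (∑ i, (g (e i) (e i) (e i₀) W + g (e i) (e i) W (e i₀)
        + g (e i₀) W (e i) (e i) + g W (e i₀) (e i) (e i))).re = 0 := by
  classical
  obtain ⟨M, hM⟩ : ∃ M : ℂ, M = ∑ i, (g (e i) (e i) (e i₀) W + g (e i) (e i) W (e i₀)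
      + g (e i₀) W (e i) (e i) + g W (e i₀) (e i) (e i)) := ⟨_, rfl⟩
  obtain ⟨Z1, hZ1⟩ : ∃ z : ℂ, z = (∑ i, g (e i₀) (e i₀) (e i) (e i))
      + (∑ i, g (e i) (e i) (e i₀) (e i₀)) := ⟨_, rfl⟩
  obtain ⟨Z2, hZ2⟩ : ∃ z : ℂ, z = (∑ i, g W W (e i) (e i)) + (∑ i, g (e i) (e i) W W)
      - g W W (e i₀) (e i₀) - g (e i₀) (e i₀) W W := ⟨_, rfl⟩
  obtain ⟨Z3, hZ3⟩ : ∃ z : ℂ, z = g (e i₀) (e i₀) (e i₀) (e i₀) := ⟨_, rfl⟩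
  obtain ⟨Z4, hZ4⟩ : ∃ z : ℂ, z = g (e i₀) W (e i₀) (e i₀) + g W (e i₀) (e i₀) (e i₀)
      + g (e i₀) (e i₀) (e i₀) W + g (e i₀) (e i₀) W (e i₀) := ⟨_, rfl⟩
  obtain ⟨Z5, hZ5⟩ : ∃ z : ℂ, z = g (e i₀) (e i₀) W W + g W W (e i₀) (e i₀)
      + g (e i₀) W (e i₀) W + g (e i₀) W W (e i₀) + g W (e i₀) (e i₀) W
      + g W (e i₀) W (e i₀) := ⟨_, rfl⟩
  obtain ⟨Z6, hZ6⟩ : ∃ z : ℂ, z = g (e i₀) W W W + g W (e i₀) W W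
      + g W W (e i₀) W + g W W W (e i₀) := ⟨_, rfl⟩
  obtain ⟨Z7, hZ7⟩ : ∃ z : ℂ, z = g W W W W := ⟨_, rfl⟩
  set C₀ : ℝ := ‖Z1‖ + ‖Z2‖ + ‖Z3‖ + ‖Z4‖
      + ‖Z5‖ + ‖Z6‖ + ‖Z7‖ with hC₀
  have hC₀nonneg : 0 ≤ C₀ := by
    have := norm_nonneg Z1
    have := norm_nonneg Z2
    have := norm_nonneg Z3
    have := norm_nonneg Z4
    have := norm_nonneg Z5
    have := norm_nonneg Z6
    have := norm_nonneg Z7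
    rw [hC₀]; linarith
  have he' := orthonormal_iff_ite.mp he
  have hWe' : ∀ i, ⟪W, e i⟫ = 0 := fun i => by
    rw [← inner_conj_symm, hWe i, map_zero]
  have hWW : ⟪W, W⟫ = 1 := by
    rw [inner_self_eq_norm_sq_to_K, hW]; norm_num
  have hkey : ∀ t : ℝ, 0 ≤ Real.cos t * Real.sin t * M.re + Real.sin t ^ 2 * C₀ := by
    intro t
    obtain ⟨a, ha⟩ : ∃ a : ℝ, a = Real.cos t := ⟨_, rfl⟩
    obtain ⟨b, hb⟩ : ∃ b : ℝ, b = Real.sin t := ⟨_, rfl⟩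
    have hab : a ^ 2 + b ^ 2 = 1 := by rw [ha, hb]; exact Real.cos_sq_add_sin_sq t
    have habℂ : (a : ℂ) ^ 2 + (b : ℂ) ^ 2 = 1 := by exact_mod_cast congrArg (Complex.ofReal) hab
    obtain ⟨v, hv⟩ : ∃ v : H, v = (a : ℂ) • e i₀ + (b : ℂ) • W := ⟨_, rfl⟩
    obtain ⟨F, hF⟩ : ∃ F : Fin k → H, F = fun i => if i = i₀ then v else e i := ⟨_, rfl⟩
    have hFi : ∀ i, F i = if i = i₀ then v else e i := fun i => by rw [hF]
    -- orthonormality of F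
    have huu : ⟪e i₀, e i₀⟫ = 1 := by simpa using he' i₀ i₀
    have hvv : ⟪v, v⟫ = 1 := by
      rw [hv]
      simp only [inner_add_left, inner_add_right, inner_smul_left, inner_smul_right,
        hWe i₀, hWe' i₀, hWW, huu, Complex.conj_ofReal, mul_zero, mul_one, add_zero, zero_add]
      exact_mod_cast congrArg (Complex.ofReal) (by nlinarith : a * a + b * b = (1:ℝ))
    have hvej : ∀ j, j ≠ i₀ → ⟪v, e j⟫ = 0 := by
      intro j hj
      rw [hv]
      have h1 : ⟪e i₀, e j⟫ = 0 := by rw [he' i₀ j, if_neg (fun h => hj h.symm)]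
      simp only [inner_add_left, inner_smul_left, hWe' j, h1, mul_zero, add_zero, zero_add]
    have hejv : ∀ j, j ≠ i₀ → ⟪e j, v⟫ = 0 := by
      intro j hj
      rw [hv]
      have h1 : ⟪e j, e i₀⟫ = 0 := by rw [he' j i₀, if_neg hj]
      simp only [inner_add_right, inner_smul_right, hWe j, h1, mul_zero, add_zero, zero_add]
    have honF : Orthonormal ℂ F := by
      rw [orthonormal_iff_ite]
      intro i j
      by_cases hi : i = i₀ <;> by_cases hj : j = i₀
      · rw [hFi i, hFi j, if_pos hi, if_pos hj, hvv, if_pos (hi.trans hj.symm)]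
      · have hij : i ≠ j := fun h => hj (h ▸ hi)
        rw [hFi i, hFi j, if_pos hi, if_neg hj, hvej j hj, if_neg hij]
      · have hij : i ≠ j := fun h => hi (h.symm ▸ hj)
        rw [hFi i, hFi j, if_neg hi, if_pos hj, hejv i hi, if_neg hij]
      · rw [hFi i, hFi j, if_neg hi, if_neg hj, he' i j]
    -- the span of F and its orthonormal basis
    have hrank : Module.finrank ℂ (Submodule.span ℂ (Set.range F)) = k := by
      rw [finrank_span_eq_card honF.linearIndependent, Fintype.card_fin]
    obtain ⟨E', hcoe⟩ : ∃ E' : OrthonormalBasis (Fin k) ℂ (Submodule.span ℂ (Set.range F)),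
        ∀ i, (E' i : H) = F i := by
      let bQ : Module.Basis (Fin k) ℂ (Submodule.span ℂ (Set.range F)) :=
        Module.Basis.span honF.linearIndependent
      have hcoe' : ∀ i, (bQ i : H) = F i := fun i => congrArg Subtype.val (Module.Basis.span_apply honF.linearIndependent i)
      have honQ : Orthonormal ℂ ⇑bQ := by
        have h1 := orthonormal_span honF
        have h2 : ⇑bQ = fun i => (⟨F i, Submodule.subset_span (Set.mem_range_self i)⟩ :
            Submodule.span ℂ (Set.range F)) := funext fun i => Subtype.ext (hcoe' i)
        rw [h2]
        exact h1
      refine ⟨bQ.toOrthonormalBasis honQ, fun i => ?_⟩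
      rw [Module.Basis.coe_toOrthonormalBasis]
      exact hcoe' i
    have hle := hmin _ hrank E'
    simp only [hcoe] at hle
    -- the expansion
    have hexp := CT.expand hg e W i₀ a b v hv F hFi
    have hMsplit : ((∑ i, g (e i) (e i) (e i₀) W) + (∑ i, g (e i) (e i) W (e i₀))
          + (∑ i, g (e i₀) W (e i) (e i)) + (∑ i, g W (e i₀) (e i) (e i))) = M := by
      rw [hM, Finset.sum_add_distrib, Finset.sum_add_distrib, Finset.sum_add_distrib]
    obtain ⟨R, hR⟩ : ∃ R : ℂ, R = -Z1 + Z2 + (↑(b^2) : ℂ)*Z3 + (↑(-(a*b)) : ℂ)*Z4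
        + (↑(a^2) : ℂ)*Z5 + (↑(a*b) : ℂ)*Z6 + (↑(b^2) : ℂ)*Z7 := ⟨_, rfl⟩
    have hSf : (∑ i, ∑ j, g (F i) (F i) (F j) (F j))
        = (∑ i, ∑ j, g (e i) (e i) (e j) (e j)) + (↑(a*b) : ℂ) * M + (↑(b^2) : ℂ) * R := by
      rw [hexp, hMsplit, ← hZ1, ← hZ2, ← hZ3, ← hZ4, ← hZ5, ← hZ6, ← hZ7, hR]
      push_cast
      linear_combination (Z1 + ((a:ℂ)^2 - 1 - (b:ℂ)^2)*Z3 + (a:ℂ)*(b:ℂ)*Z4) * habℂ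
    have hre : (∑ i, ∑ j, g (F i) (F i) (F j) (F j)).re
        = (∑ i, ∑ j, g (e i) (e i) (e j) (e j)).re + (a*b) * M.re + (b^2) * R.re := by
      rw [hSf]
      simp only [Complex.add_re, Complex.re_ofReal_mul]
    have haa : |a| ≤ 1 := by rw [ha]; exact Real.abs_cos_le_one t
    have hbb : |b| ≤ 1 := by rw [hb]; exact Real.abs_sin_le_one t
    have hRre : R.re ≤ C₀ := by
      rw [hR]
      simp only [Complex.add_re]
      have l1 : (-Z1).re ≤ ‖Z1‖ := by
        rw [Complex.neg_re]
        linarith [(abs_le.mp (Complex.abs_re_le_norm Z1)).1]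
      have l2 : Z2.re ≤ ‖Z2‖ := Complex.re_le_norm Z2
      have l3 := scal_re_le (b^2) Z3 (by
        rw [abs_of_nonneg (sq_nonneg b)]
        nlinarith [abs_nonneg b, sq_abs b])
      have l4 := scal_re_le (-(a*b)) Z4 (by
        rw [abs_neg, abs_mul]
        nlinarith [abs_nonneg a, abs_nonneg b])
      have l5 := scal_re_le (a^2) Z5 (by
        rw [abs_of_nonneg (sq_nonneg a)]
        nlinarith [abs_nonneg a, sq_abs a])
      have l6 := scal_re_le (a*b) Z6 (by
        rw [abs_mul]
        nlinarith [abs_nonneg a, abs_nonneg b])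
      have l7 := scal_re_le (b^2) Z7 (by
        rw [abs_of_nonneg (sq_nonneg b)]
        nlinarith [abs_nonneg b, sq_abs b])
      rw [hC₀]
      linarith
    rw [hre] at hle
    have hb2 : (b^2) * R.re ≤ (b^2) * C₀ := mul_le_mul_of_nonneg_left hRre (sq_nonneg b)
    rw [← ha, ← hb]
    linarith [hle, hb2]
  have := aux_real hC₀nonneg hkey
  rw [← hM]
  exact this

lemma CT.zero3 {H : Type*} [AddCommGroup H] [Module ℂ H] {g : H → H → H → H → ℂ}
    (hg : CurvatureType g) (x y w : H) : g x y 0 w = 0 := by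
  have := hg.2.2.2.2.2.1 0 x y 0 w
  simpa using this

lemma CT.zero4 {H : Type*} [AddCommGroup H] [Module ℂ H] {g : H → H → H → H → ℂ}
    (hg : CurvatureType g) (x y z : H) : g x y z 0 = 0 := by
  have := hg.2.2.2.2.2.2.2 0 x y z 0
  simpa using this

lemma CT.sum3 {H : Type*} [AddCommGroup H] [Module ℂ H] {g : H → H → H → H → ℂ}
    (hg : CurvatureType g) {ι : Type*} (s : Finset ι) (v : ι → H) (x y w : H) :
    g x y (∑ m ∈ s, v m) w = ∑ m ∈ s, g x y (v m) w := by
  classical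
  induction s using Finset.induction_on with
  | empty => simpa using CT.zero3 hg x y w
  | insert _ _ hns ih => rw [Finset.sum_insert hns, hg.2.2.2.2.1, ih, Finset.sum_insert hns]

lemma CT.neg {H : Type*} [AddCommGroup H] [Module ℂ H] {g : H → H → H → H → ℂ}
    (hg : CurvatureType g) : CurvatureType (fun x y z w => -(g x y z w)) := by
  obtain ⟨a1, s1, a2, s2, a3, s3, a4, s4⟩ := hg
  exact ⟨fun x x' y z w => by simp only [a1]; ring,
    fun c x y z w => by simp only [s1]; ring,
    fun x y y' z w => by simp only [a2]; ring,
    fun c x y z w => by simp only [s2]; ring,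
    fun x y z z' w => by simp only [a3]; ring,
    fun c x y z w => by simp only [s3]; ring,
    fun x y z w w' => by simp only [a4]; ring,
    fun c x y z w => by simp only [s4]; ring⟩


set_option maxHeartbeats 1000000 in
/-- first part of the Ni–Zheng estimate. If the `k`-dimensional subspace `P`
minimizes (or maximizes) `s(Σ) = Σ_{i,j} g(E_i,E_i,E_j,E_j)` among all `k`-dimensional
subspaces, then for every orthonormal basis `{E_i}` of `P`, every `Y ∈ P` and every `Z ∈ P^⊥`,
`Σ_i g(E_i,E_i,Y,Z) = 0` and `Σ_i g(E_i,E_i,Z,Y) = 0`. -/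
theorem stmt_11 (n k : ℕ) (hk : 1 ≤ k) (hkn : k ≤ n)
    (g : EuclideanSpace ℂ (Fin n) → EuclideanSpace ℂ (Fin n) → EuclideanSpace ℂ (Fin n) →
      EuclideanSpace ℂ (Fin n) → ℂ)
    (hg : CurvatureType g) (hsym : KahlerSymmetries g)
    (P : Submodule ℂ (EuclideanSpace ℂ (Fin n))) (hP : Module.finrank ℂ P = k)
    (hext :
      (∀ (E : OrthonormalBasis (Fin k) ℂ P) (Q : Submodule ℂ (EuclideanSpace ℂ (Fin n))),
          Module.finrank ℂ Q = k → ∀ E' : OrthonormalBasis (Fin k) ℂ Q,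
          (∑ i : Fin k, ∑ j : Fin k, g (E i) (E i) (E j) (E j)).re ≤
            (∑ i : Fin k, ∑ j : Fin k, g (E' i) (E' i) (E' j) (E' j)).re) ∨
      (∀ (E : OrthonormalBasis (Fin k) ℂ P) (Q : Submodule ℂ (EuclideanSpace ℂ (Fin n))),
          Module.finrank ℂ Q = k → ∀ E' : OrthonormalBasis (Fin k) ℂ Q,
          (∑ i : Fin k, ∑ j : Fin k, g (E' i) (E' i) (E' j) (E' j)).re ≤
            (∑ i : Fin k, ∑ j : Fin k, g (E i) (E i) (E j) (E j)).re))
    (E : OrthonormalBasis (Fin k) ℂ P)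
    (Y : EuclideanSpace ℂ (Fin n)) (hY : Y ∈ P)
    (Z : EuclideanSpace ℂ (Fin n)) (hZ : Z ∈ Pᗮ) :
    (∑ i : Fin k, g (E i) (E i) Y Z) = 0 ∧ (∑ i : Fin k, g (E i) (E i) Z Y) = 0 := by
  classical
  have hs1 := hsym.1
  have hs2 := hsym.2
  set e : Fin k → EuclideanSpace ℂ (Fin n) := fun i => (E i : EuclideanSpace ℂ (Fin n)) with he_def
  have he : Orthonormal ℂ e := by
    rw [orthonormal_iff_ite]
    intro i j
    have h := orthonormal_iff_ite.mp E.orthonormal i j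
    rwa [Submodule.coe_inner] at h
  -- symmetry consequences
  have key : ∀ (u w : EuclideanSpace ℂ (Fin n)) (i : Fin k), g (e i) (e i) w u = (starRingEnd ℂ) (g (e i) (e i) u w) := by
    intro u w i
    exact hs2 (e i) (e i) w u
  have sym2 : ∀ (u w : EuclideanSpace ℂ (Fin n)) (i : Fin k), g u w (e i) (e i) = g (e i) (e i) u w := by
    intro u w i
    calc g u w (e i) (e i) = g (e i) w u (e i) := hs1 u w (e i) (e i)
      _ = (starRingEnd ℂ) (g w (e i) (e i) u) := hs2 (e i) w u (e i)
      _ = (starRingEnd ℂ) (g (e i) (e i) w u) := by rw [hs1 w (e i) (e i) u]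
      _ = (starRingEnd ℂ) ((starRingEnd ℂ) (g (e i) (e i) u w)) := by rw [key u w i]
      _ = g (e i) (e i) u w := Complex.conj_conj _
  have sym3 : ∀ (u w : EuclideanSpace ℂ (Fin n)) (i : Fin k), g w u (e i) (e i)
      = (starRingEnd ℂ) (g (e i) (e i) u w) := by
    intro u w i
    rw [hs2 w u (e i) (e i), sym2 u w i]
  -- first-order vanishing of M for every admissible W
  have hM : ∀ W : EuclideanSpace ℂ (Fin n), ‖W‖ = 1 → (∀ i, ⟪e i, W⟫ = 0) → ∀ i₀ : Fin k,
      (∑ i, (g (e i) (e i) (e i₀) W + g (e i) (e i) W (e i₀)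
        + g (e i₀) W (e i) (e i) + g W (e i₀) (e i) (e i))).re = 0 := by
    intro W hW hWe i₀
    rcases hext with hmin | hmax
    · exact first_order g hg e he W hW hWe i₀ (fun Q hQ E' => hmin E Q hQ E')
    · have h0 := first_order (fun x y z w => -(g x y z w)) (CT.neg hg) e he W hW hWe i₀
        (fun Q hQ E' => by
          have h1 := hmax E Q hQ E'
          have e1 : (∑ i, ∑ j, (fun x y z w => -(g x y z w)) (e i) (e i) (e j) (e j))
              = -(∑ i : Fin k, ∑ j : Fin k, g (e i) (e i) (e j) (e j)) := by
            simp [Finset.sum_neg_distrib]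
          have e2 : (∑ i, ∑ j, (fun x y z w => -(g x y z w)) (E' i) (E' i) (E' j) (E' j))
              = -(∑ i : Fin k, ∑ j : Fin k, g (E' i) (E' i) (E' j) (E' j)) := by
            simp [Finset.sum_neg_distrib]
          rw [e1, e2, Complex.neg_re, Complex.neg_re]
          linarith)
      have e3 : (∑ i, ((fun x y z w => -(g x y z w)) (e i) (e i) (e i₀) W
            + (fun x y z w => -(g x y z w)) (e i) (e i) W (e i₀)
            + (fun x y z w => -(g x y z w)) (e i₀) W (e i) (e i)
            + (fun x y z w => -(g x y z w)) W (e i₀) (e i) (e i)))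
          = -(∑ i, (g (e i) (e i) (e i₀) W + g (e i) (e i) W (e i₀)
            + g (e i₀) W (e i) (e i) + g W (e i₀) (e i) (e i))) := by
        rw [← Finset.sum_neg_distrib]
        exact Finset.sum_congr rfl fun i _ => by ring
      rw [e3, Complex.neg_re] at h0
      linarith
  -- T vanishing
  have hT : ∀ W : EuclideanSpace ℂ (Fin n), ‖W‖ = 1 → (∀ i, ⟪e i, W⟫ = 0) → ∀ i₀ : Fin k,
      (∑ i, g (e i) (e i) (e i₀) W) = 0 := by
    intro W hW hWe i₀
    obtain ⟨T, hTdef⟩ : ∃ T : ℂ, T = ∑ i, g (e i) (e i) (e i₀) W := ⟨_, rfl⟩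
    have h1 := hM W hW hWe i₀
    have hc1 : (∑ i, (g (e i) (e i) (e i₀) W + g (e i) (e i) W (e i₀)
        + g (e i₀) W (e i) (e i) + g W (e i₀) (e i) (e i)))
        = 2 * T + 2 * (starRingEnd ℂ) T := by
      have : ∀ i : Fin k, g (e i) (e i) (e i₀) W + g (e i) (e i) W (e i₀)
          + g (e i₀) W (e i) (e i) + g W (e i₀) (e i) (e i)
          = 2 * g (e i) (e i) (e i₀) W + 2 * (starRingEnd ℂ) (g (e i) (e i) (e i₀) W) := by
        intro i
        rw [key (e i₀) W i, sym2 (e i₀) W i, sym3 (e i₀) W i]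
        ring
      rw [Finset.sum_congr rfl fun i _ => this i, Finset.sum_add_distrib,
        ← Finset.mul_sum, ← Finset.mul_sum, ← map_sum, ← hTdef]
    rw [hc1] at h1
    have hre : T.re = 0 := by
      have e1 : 2 * T + 2 * (starRingEnd ℂ) T = ((4 * T.re : ℝ) : ℂ) := by
        linear_combination (norm := (push_cast; ring)) 2 * Complex.add_conj T
      rw [e1, Complex.ofReal_re] at h1
      linarith
    -- imaginary part via I • W
    have hWI : ‖(Complex.I : ℂ) • W‖ = 1 := by
      rw [norm_smul, hW, mul_one, Complex.norm_I]
    have hWeI : ∀ i, ⟪e i, (Complex.I : ℂ) • W⟫ = 0 := fun i => by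
      rw [inner_smul_right, hWe i, mul_zero]
    have h2 := hM ((Complex.I : ℂ) • W) hWI hWeI i₀
    have hc2 : (∑ i, (g (e i) (e i) (e i₀) ((Complex.I : ℂ) • W)
        + g (e i) (e i) ((Complex.I : ℂ) • W) (e i₀)
        + g (e i₀) ((Complex.I : ℂ) • W) (e i) (e i)
        + g ((Complex.I : ℂ) • W) (e i₀) (e i) (e i)))
        = -2 * Complex.I * T + 2 * Complex.I * (starRingEnd ℂ) T := by
      have : ∀ i : Fin k, g (e i) (e i) (e i₀) ((Complex.I : ℂ) • W)
          + g (e i) (e i) ((Complex.I : ℂ) • W) (e i₀)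
          + g (e i₀) ((Complex.I : ℂ) • W) (e i) (e i)
          + g ((Complex.I : ℂ) • W) (e i₀) (e i) (e i)
          = -2 * Complex.I * g (e i) (e i) (e i₀) W
            + 2 * Complex.I * (starRingEnd ℂ) (g (e i) (e i) (e i₀) W) := by
        intro i
        rw [hg.2.2.2.2.2.2.2, hg.2.2.2.2.2.1, hg.2.2.2.1, hg.2.1]
        rw [key (e i₀) W i, sym2 (e i₀) W i, sym3 (e i₀) W i, Complex.conj_I]
        ring
      rw [Finset.sum_congr rfl fun i _ => this i, Finset.sum_add_distrib,
        ← Finset.mul_sum, ← Finset.mul_sum, ← map_sum, ← hTdef]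
    rw [hc2] at h2
    have him : T.im = 0 := by
      have e2 : -2 * Complex.I * T + 2 * Complex.I * (starRingEnd ℂ) T
          = ((4 * T.im : ℝ) : ℂ) := by
        linear_combination (norm := (push_cast; ring)) (-2 * Complex.I) * Complex.sub_conj T
          + (-4 * (T.im : ℂ)) * Complex.I_sq
      rw [e2, Complex.ofReal_re] at h2
      linarith
    rw [← hTdef]
    exact Complex.ext (by simpa using hre) (by simpa using him)
  -- conclude
  by_cases hZ0 : Z = 0
  · subst hZ0
    constructor
    · simp only [CT.zero4 hg, Finset.sum_const_zero]
    · simp only [CT.zero3 hg, Finset.sum_const_zero]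
  · obtain ⟨W, hWdef⟩ : ∃ W : EuclideanSpace ℂ (Fin n), W = ((‖Z‖ : ℂ))⁻¹ • Z := ⟨_, rfl⟩
    have hZne : (‖Z‖ : ℂ) ≠ 0 := by
      simp [norm_eq_zero, hZ0]
    have hWnorm : ‖W‖ = 1 := by
      rw [hWdef, norm_smul, norm_inv, Complex.norm_real, Real.norm_eq_abs, abs_norm]
      exact inv_mul_cancel₀ (norm_ne_zero_iff.mpr hZ0)
    have hWe : ∀ i, ⟪e i, W⟫ = 0 := by
      intro i
      rw [hWdef, inner_smul_right]
      have : ⟪e i, Z⟫ = 0 := (Submodule.mem_orthogonal P Z).mp hZ (e i) (SetLike.coe_mem (E i))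
      rw [this, mul_zero]
    have hZW : Z = (‖Z‖ : ℂ) • W := by
      rw [hWdef, smul_smul, mul_inv_cancel₀ hZne, one_smul]
    have hTall : ∀ m : Fin k, (∑ i, g (e i) (e i) (e m) W) = 0 := fun m =>
      hT W hWnorm hWe m
    -- expand Y
    obtain ⟨c, hc⟩ : ∃ c : Fin k → ℂ, ∀ m, c m = E.repr ⟨Y, hY⟩ m := ⟨_, fun _ => rfl⟩
    have hYrep : Y = ∑ m, c m • e m := by
      have h1 := E.sum_repr ⟨Y, hY⟩
      have h2 := congrArg (Subtype.val) h1
      push_cast at h2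
      rw [← h2]
      exact Finset.sum_congr rfl fun m _ => by rw [hc]
    have hfirst : (∑ i, g (e i) (e i) Y Z) = 0 := by
      have hterm : ∀ i : Fin k, g (e i) (e i) Y Z
          = (starRingEnd ℂ) ((‖Z‖ : ℂ)) * ∑ m, c m * g (e i) (e i) (e m) W := by
        intro i
        conv_lhs => rw [hZW, hYrep]
        rw [hg.2.2.2.2.2.2.2, CT.sum3 hg]
        congr 1
        exact Finset.sum_congr rfl fun m _ => hg.2.2.2.2.2.1 (c m) _ _ _ _
      rw [Finset.sum_congr rfl fun i _ => hterm i, ← Finset.mul_sum, Finset.sum_comm]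
      have : ∀ m : Fin k, (∑ i, c m * g (e i) (e i) (e m) W) = 0 := by
        intro m
        rw [← Finset.mul_sum, hTall m, mul_zero]
      rw [Finset.sum_congr rfl fun m _ => this m, Finset.sum_const_zero, mul_zero]
    refine ⟨hfirst, ?_⟩
    have : ∀ i : Fin k, g (e i) (e i) Z Y = (starRingEnd ℂ) (g (e i) (e i) Y Z) := fun i =>
      key Y Z i
    rw [Finset.sum_congr rfl fun i _ => this i, ← map_sum, hfirst, map_zero]
end

section
/- Let 1 ≤ k ≤ n, let g : (ℂ^n)^4 → ℂ be quadrilinear of curvature type satisfying the Kähler-type symmetries, and let Σ ⊆ ℂ^n be a k-dimensional complex subspace that minimizes s among all k-dimensional complex subspaces of ℂ^n. Then for every orthonormal basis {E_1,…,E_k} of Σ and every Z ∈ Σ^⊥, the (real) number Σ_{i=1}^k g(E_i,E_i,Z,Z) satisfies Σ_{i=1}^k g(E_i,E_i,Z,Z) ≥ (s(Σ)/(k+1)) · ‖Z‖². -/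
set_option maxHeartbeats 1000000

section helpers
variable {H : Type*} [AddCommGroup H] [Module ℂ H] {g : H → H → H → H → ℂ}

lemma pairswap (hsym : KahlerSymmetries g) (x y z w : H) : g x y z w = g z w x y := by
  obtain ⟨h1, h2⟩ := hsym
  calc g x y z w = g z y x w := h1 x y z w
    _ = (starRingEnd ℂ) (g y z w x) := h2 z y x w
    _ = (starRingEnd ℂ) (g w z y x) := by rw [h1 y z w x]
    _ = g z w x y := (h2 z w x y).symm

lemma g_zero3 (hg : CurvatureType g) (x y w : H) : g x y 0 w = 0 := by
  have := hg.2.2.2.2.2.1 0 x y 0 w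
  simpa using this

lemma expand12 (hg : CurvatureType g) (a b : ℂ) (u W X Y : H) :
    g (a • u + b • W) (a • u + b • W) X Y =
      a * (starRingEnd ℂ) a * g u u X Y + a * (starRingEnd ℂ) b * g u W X Y +
      b * (starRingEnd ℂ) a * g W u X Y + b * (starRingEnd ℂ) b * g W W X Y := by
  obtain ⟨a1, s1, a2, s2, a3, s3, a4, s4⟩ := hg
  rw [a1, a2, a2, s1, s1, s1, s1, s2, s2, s2, s2]
  ring

lemma expand34 (hg : CurvatureType g) (a b : ℂ) (u W X Y : H) :
    g X Y (a • u + b • W) (a • u + b • W) =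
      a * (starRingEnd ℂ) a * g X Y u u + a * (starRingEnd ℂ) b * g X Y u W +
      b * (starRingEnd ℂ) a * g X Y W u + b * (starRingEnd ℂ) b * g X Y W W := by
  obtain ⟨a1, s1, a2, s2, a3, s3, a4, s4⟩ := hg
  rw [a3, a4, a4, s3, s3, s3, s3, s4, s4, s4, s4]
  ring

lemma gsmul34 (hg : CurvatureType g) (c : ℂ) (x y z w : H) :
    g x y (c • z) (c • w) = c * (starRingEnd ℂ) c * g x y z w := by
  rw [hg.2.2.2.2.2.1, hg.2.2.2.2.2.2.2]; ring

end helpers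

lemma quad_coeff_nonneg {a1 a2 a3 a4 : ℝ}
    (h : ∀ t : ℝ, 0 ≤ a1*t + a2*t^2 + a3*t^3 + a4*t^4) : 0 ≤ a2 := by
  have heven : ∀ t : ℝ, 0 ≤ a2*t^2 + a4*t^4 := by
    intro t; have h1 := h t; have h2 := h (-t); nlinarith
  by_contra hneg
  push_neg at hneg
  set ε : ℝ := min 1 (-a2/(|a4|+1)) with hε
  have ha4 : 0 ≤ |a4| := abs_nonneg a4
  have ha4' : a4 ≤ |a4| := le_abs_self a4
  have hε0 : 0 < ε := by
    apply lt_min one_pos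
    apply div_pos (by linarith) (by linarith)
  have hε1 : ε ≤ 1 := min_le_left _ _
  have hε2 : ε ≤ -a2/(|a4|+1) := min_le_right _ _
  have hε2' : ε * (|a4|+1) ≤ -a2 := (le_div_iff₀ (by linarith)).mp hε2
  have hs : Real.sqrt ε ^ 2 = ε := Real.sq_sqrt hε0.le
  have hs4 : Real.sqrt ε ^ 4 = ε ^ 2 := by
    rw [show (4:ℕ) = 2*2 from rfl, pow_mul, hs]
  have h3 := heven (Real.sqrt ε)
  rw [hs, hs4] at h3
  nlinarith [h3, mul_pos hε0 hε0]

local notation "⟪" x ", " y "⟫" => @inner ℂ _ _ x y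

lemma key_ineq (n k : ℕ)
    (g : EuclideanSpace ℂ (Fin n) → EuclideanSpace ℂ (Fin n) → EuclideanSpace ℂ (Fin n) →
      EuclideanSpace ℂ (Fin n) → ℂ)
    (hg : CurvatureType g) (hsym : KahlerSymmetries g)
    (P : Submodule ℂ (EuclideanSpace ℂ (Fin n)))
    (hmin :
      ∀ (E : OrthonormalBasis (Fin k) ℂ P) (Q : Submodule ℂ (EuclideanSpace ℂ (Fin n))),
        Module.finrank ℂ Q = k → ∀ E' : OrthonormalBasis (Fin k) ℂ Q,
        (∑ i : Fin k, ∑ j : Fin k, g (E i) (E i) (E j) (E j)).re ≤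
          (∑ i : Fin k, ∑ j : Fin k, g (E' i) (E' i) (E' j) (E' j)).re)
    (E : OrthonormalBasis (Fin k) ℂ P) (a : Fin k)
    (W : EuclideanSpace ℂ (Fin n)) (hW : W ∈ Pᗮ) (hWn : ‖W‖ = 1) :
    (∑ j : Fin k, g (E j) (E j) (E a) (E a)).re ≤
      (∑ j : Fin k, g (E j) (E j) W W).re + (g (E a) (E a) W W).re +
      (g W (E a) W (E a)).re := by
  classical
  obtain ⟨ec, hec⟩ : ∃ ec : Fin k → EuclideanSpace ℂ (Fin n),
      ∀ i, ((E i : P) : EuclideanSpace ℂ (Fin n)) = ec i :=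
    ⟨fun i => ↑(E i), fun _ => rfl⟩
  simp only [hec]
  set e : Finset (Fin k) := Finset.univ.erase a with he
  have hee : ∀ i j, ⟪ec i, ec j⟫ = if i = j then (1:ℂ) else 0 := by
    intro i j
    rw [← hec i, ← hec j, ← Submodule.coe_inner]
    exact orthonormal_iff_ite.mp E.orthonormal i j
  have heW : ∀ i, ⟪ec i, W⟫ = 0 := by
    intro i
    rw [← hec i]
    exact (Submodule.mem_orthogonal P W).mp hW _ (SetLike.coe_mem (E i))
  have hWe : ∀ i, ⟪W, ec i⟫ = 0 := fun i => inner_eq_zero_symm.mp (heW i)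
  have hWW : ⟪W, W⟫ = 1 := by
    rw [inner_self_eq_norm_sq_to_K, hWn]; norm_num
  set L0c : ℂ := ∑ j ∈ e, (g (ec a) (ec a) (ec j) (ec j) + g (ec j) (ec j) (ec a) (ec a))
    with hL0c
  set L1c : ℂ := ∑ j ∈ e, (g (ec a) W (ec j) (ec j) + g W (ec a) (ec j) (ec j) +
      g (ec j) (ec j) (ec a) W + g (ec j) (ec j) W (ec a)) with hL1c
  set L2c : ℂ := ∑ j ∈ e, (g W W (ec j) (ec j) + g (ec j) (ec j) W W) with hL2c
  set Q0c : ℂ := g (ec a) (ec a) (ec a) (ec a) with hQ0c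
  set Q1c : ℂ := g W (ec a) (ec a) (ec a) + g (ec a) W (ec a) (ec a) +
      g (ec a) (ec a) W (ec a) + g (ec a) (ec a) (ec a) W with hQ1c
  set Q2c : ℂ := g W W (ec a) (ec a) + g W (ec a) W (ec a) + g W (ec a) (ec a) W +
      g (ec a) W W (ec a) + g (ec a) W (ec a) W + g (ec a) (ec a) W W with hQ2c
  set Q3c : ℂ := g W W W (ec a) + g W W (ec a) W + g W (ec a) W W + g (ec a) W W W with hQ3c
  set Q4c : ℂ := g W W W W with hQ4c
  set Ac : ℂ := ∑ i : Fin k, ∑ j : Fin k, g (ec i) (ec i) (ec j) (ec j) with hAc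
  have hsplit : ∀ (φ : Fin k → ℂ), ∑ i : Fin k, φ i = φ a + ∑ i ∈ e, φ i := fun φ =>
    (Finset.add_sum_erase _ φ (Finset.mem_univ a)).symm
  -- ================= the variational inequality =================
  have main : ∀ t : ℝ, 0 ≤ (L1c+Q1c).re * t + (L2c - L0c - Q0c - Q0c + Q2c).re * t^2 +
      (L1c+Q3c).re * t^3 + (L2c - L0c - Q0c + Q4c).re * t^4 := by
    intro t
    have h1t : (0:ℝ) < 1 + t^2 := by positivity
    set c : ℝ := (Real.sqrt (1+t^2))⁻¹ with hc
    have hc2 : c^2 * (1+t^2) = 1 := by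
      rw [hc, inv_pow, Real.sq_sqrt h1t.le]
      exact inv_mul_cancel₀ h1t.ne'
    set s : ℝ := c * t with hsdef
    have hcs : c^2 + s^2 = 1 := by rw [hsdef]; nlinarith [hc2]
    set va : EuclideanSpace ℂ (Fin n) := ((c:ℝ):ℂ) • ec a + ((s:ℝ):ℂ) • W with hva
    set v : Fin k → EuclideanSpace ℂ (Fin n) := Function.update ec a va with hv
    have hva_a : v a = va := Function.update_self a va ec
    have hvne : ∀ i, i ≠ a → v i = ec i := fun i hi => Function.update_of_ne hi va ec
    have hvj : ∀ j ∈ e, v j = ec j := fun j hj => hvne j (Finset.ne_of_mem_erase hj)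
    -- orthonormality of the new family
    have hinner_va_va : ⟪va, va⟫ = 1 := by
      have h1 : ((c:ℝ):ℂ) * ((c:ℝ):ℂ) + ((s:ℝ):ℂ) * ((s:ℝ):ℂ) = 1 := by
        have h2 : ((c^2+s^2 : ℝ):ℂ) = 1 := by rw [hcs]; norm_num
        push_cast at h2
        linear_combination h2
      rw [hva]
      simp only [inner_add_left, inner_add_right, inner_smul_left, inner_smul_right,
        Complex.conj_ofReal, hee, heW, hWe, hWW, eq_self_iff_true, if_true]
      linear_combination h1
    have hinner_va_e : ∀ j, j ≠ a → ⟪va, ec j⟫ = 0 := by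
      intro j hj
      rw [hva]
      simp only [inner_add_left, inner_smul_left, Complex.conj_ofReal, hee, hWe,
        if_neg (Ne.symm hj)]
      ring
    have hinner_e_va : ∀ j, j ≠ a → ⟪ec j, va⟫ = 0 := by
      intro j hj
      rw [hva]
      simp only [inner_add_right, inner_smul_right, hee, heW, if_neg (hj : j ≠ a)]
      ring
    have hvon : Orthonormal ℂ v := by
      rw [orthonormal_iff_ite]
      intro i j
      by_cases hi : i = a
      · by_cases hj : j = a
        · rw [hi, hj, hva_a, hinner_va_va, if_pos rfl]
        · rw [hi, hva_a, hvne j hj, hinner_va_e j hj, if_neg (fun h => hj h.symm)]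
      · by_cases hj : j = a
        · rw [hj, hva_a, hvne i hi, hinner_e_va i hi, if_neg hi]
        · rw [hvne i hi, hvne j hj, hee i j]
    -- the minimality inequality for the new subspace
    have hAle : Ac.re ≤ (∑ i : Fin k, ∑ j : Fin k, g (v i) (v i) (v j) (v j)).re := by
      have hQ : Module.finrank ℂ (Submodule.span ℂ (Set.range v)) = k := by
        rw [finrank_span_eq_card hvon.linearIndependent, Fintype.card_fin]
      have honw := orthonormal_span (𝕜 := ℂ) hvon
      have hsp : ⊤ ≤ Submodule.span ℂ (Set.range fun i : Fin k =>
          (⟨v i, Submodule.subset_span (Set.mem_range_self i)⟩ :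
            Submodule.span ℂ (Set.range v))) := by
        refine (Submodule.eq_top_of_finrank_eq ?_).ge
        rw [finrank_span_eq_card honw.linearIndependent, Fintype.card_fin, hQ]
      have h0 := hmin E _ hQ (OrthonormalBasis.mk honw hsp)
      simp only [OrthonormalBasis.coe_mk, hec] at h0
      exact h0
    -- splitting the sums
    have houter : (∑ i : Fin k, ∑ j : Fin k, g (v i) (v i) (v j) (v j)) =
        (g va va va va + ∑ j ∈ e, g va va (ec j) (ec j))
        + (∑ i ∈ e, (g (ec i) (ec i) va va + ∑ j ∈ e, g (ec i) (ec i) (ec j) (ec j))) := by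
      rw [hsplit (fun i => ∑ j : Fin k, g (v i) (v i) (v j) (v j))]
      congr 1
      · rw [hva_a, hsplit (fun j => g va va (v j) (v j)), hva_a]
        congr 1
        exact Finset.sum_congr rfl fun j hj => by rw [hvj j hj]
      · refine Finset.sum_congr rfl fun i hi => ?_
        rw [hvj i hi, hsplit (fun j => g (ec i) (ec i) (v j) (v j)), hva_a]
        congr 1
        exact Finset.sum_congr rfl fun j hj => by rw [hvj j hj]
    have hAsplit : Ac = (g (ec a) (ec a) (ec a) (ec a) + ∑ j ∈ e, g (ec a) (ec a) (ec j) (ec j))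
        + (∑ i ∈ e, (g (ec i) (ec i) (ec a) (ec a) +
            ∑ j ∈ e, g (ec i) (ec i) (ec j) (ec j))) := by
      rw [hAc, hsplit (fun i => ∑ j : Fin k, g (ec i) (ec i) (ec j) (ec j))]
      congr 1
      · exact hsplit (fun j => g (ec a) (ec a) (ec j) (ec j))
      · exact Finset.sum_congr rfl fun i _ => hsplit (fun j => g (ec i) (ec i) (ec j) (ec j))
    have hdiff : (∑ i : Fin k, ∑ j : Fin k, g (v i) (v i) (v j) (v j)) - Ac =
        (g va va va va - g (ec a) (ec a) (ec a) (ec a))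
        + ∑ j ∈ e, ((g va va (ec j) (ec j) - g (ec a) (ec a) (ec j) (ec j))
            + (g (ec j) (ec j) va va - g (ec j) (ec j) (ec a) (ec a))) := by
      rw [houter, hAsplit]
      simp only [Finset.sum_add_distrib, Finset.sum_sub_distrib]
      ring
    -- expansions
    have hconjc : (starRingEnd ℂ) ((c:ℝ):ℂ) = ((c:ℝ):ℂ) := Complex.conj_ofReal c
    have hconjs : (starRingEnd ℂ) ((s:ℝ):ℂ) = ((s:ℝ):ℂ) := Complex.conj_ofReal s
    have hE12 : ∀ X Y, g va va X Y = ((c:ℝ):ℂ)^2 * g (ec a) (ec a) X Y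
        + ((c:ℝ):ℂ)*((s:ℝ):ℂ) * (g (ec a) W X Y + g W (ec a) X Y)
        + ((s:ℝ):ℂ)^2 * g W W X Y := by
      intro X Y
      rw [hva, expand12 hg, hconjc, hconjs]; ring
    have hE34 : ∀ X Y, g X Y va va = ((c:ℝ):ℂ)^2 * g X Y (ec a) (ec a)
        + ((c:ℝ):ℂ)*((s:ℝ):ℂ) * (g X Y (ec a) W + g X Y W (ec a))
        + ((s:ℝ):ℂ)^2 * g X Y W W := by
      intro X Y
      rw [hva, expand34 hg, hconjc, hconjs]; ring
    have hquart : g va va va va = ((c:ℝ):ℂ)^4*Q0c + ((c:ℝ):ℂ)^3*((s:ℝ):ℂ)*Q1c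
        + ((c:ℝ):ℂ)^2*((s:ℝ):ℂ)^2*Q2c + ((c:ℝ):ℂ)*((s:ℝ):ℂ)^3*Q3c + ((s:ℝ):ℂ)^4*Q4c := by
      rw [hE12 va va]
      simp only [hE34]
      rw [hQ0c, hQ1c, hQ2c, hQ3c, hQ4c]
      ring
    have perj : ∀ j ∈ e,
        (g va va (ec j) (ec j) - g (ec a) (ec a) (ec j) (ec j))
          + (g (ec j) (ec j) va va - g (ec j) (ec j) (ec a) (ec a)) =
        (((c:ℝ):ℂ)^2-1) * (g (ec a) (ec a) (ec j) (ec j) + g (ec j) (ec j) (ec a) (ec a))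
          + ((c:ℝ):ℂ)*((s:ℝ):ℂ) * (g (ec a) W (ec j) (ec j) + g W (ec a) (ec j) (ec j)
              + g (ec j) (ec j) (ec a) W + g (ec j) (ec j) W (ec a))
          + ((s:ℝ):ℂ)^2 * (g W W (ec j) (ec j) + g (ec j) (ec j) W W) := by
      intro j hj
      rw [hE12, hE34]; ring
    have hsum2 : (∑ j ∈ e, ((g va va (ec j) (ec j) - g (ec a) (ec a) (ec j) (ec j))
          + (g (ec j) (ec j) va va - g (ec j) (ec j) (ec a) (ec a)))) =
        (((c:ℝ):ℂ)^2-1)*L0c + ((c:ℝ):ℂ)*((s:ℝ):ℂ)*L1c + ((s:ℝ):ℂ)^2*L2c := by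
      rw [hL0c, hL1c, hL2c, Finset.mul_sum, Finset.mul_sum, Finset.mul_sum,
        ← Finset.sum_add_distrib, ← Finset.sum_add_distrib]
      exact Finset.sum_congr rfl perj
    have hdiff2 : (∑ i : Fin k, ∑ j : Fin k, g (v i) (v i) (v j) (v j)) - Ac =
        (((c:ℝ):ℂ)^2-1)*L0c + ((c:ℝ):ℂ)*((s:ℝ):ℂ)*L1c + ((s:ℝ):ℂ)^2*L2c
        + (((c:ℝ):ℂ)^4-1)*Q0c + ((c:ℝ):ℂ)^3*((s:ℝ):ℂ)*Q1c + ((c:ℝ):ℂ)^2*((s:ℝ):ℂ)^2*Q2c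
        + ((c:ℝ):ℂ)*((s:ℝ):ℂ)^3*Q3c + ((s:ℝ):ℂ)^4*Q4c := by
      rw [hdiff, hsum2, hquart, ← hQ0c]; ring
    -- the polynomial identity
    have hc2' : (((c:ℝ):ℂ))^2 * (1 + ((t:ℝ):ℂ)^2) = 1 := by
      have h2 := congrArg (Complex.ofReal) hc2
      push_cast at h2
      linear_combination h2
    have hs' : ((s:ℝ):ℂ) = ((c:ℝ):ℂ) * ((t:ℝ):ℂ) := by rw [hsdef]; push_cast; ring
    have hpoly : ((1+t^2 : ℝ) : ℂ)^2 * ((∑ i : Fin k, ∑ j : Fin k,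
          g (v i) (v i) (v j) (v j)) - Ac) =
        ((t:ℝ):ℂ)*(L1c+Q1c) + ((t:ℝ):ℂ)^2*(L2c-L0c-Q0c-Q0c+Q2c) + ((t:ℝ):ℂ)^3*(L1c+Q3c)
          + ((t:ℝ):ℂ)^4*(L2c-L0c-Q0c+Q4c) := by
      rw [hdiff2, hs']
      push_cast
      linear_combination ((1+((t:ℝ):ℂ)^2) * (L0c + ((t:ℝ):ℂ)*L1c + ((t:ℝ):ℂ)^2*L2c)
        + (((c:ℝ):ℂ)^2*(1+((t:ℝ):ℂ)^2)+1) * (Q0c + ((t:ℝ):ℂ)*Q1c + ((t:ℝ):ℂ)^2*Q2c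
          + ((t:ℝ):ℂ)^3*Q3c + ((t:ℝ):ℂ)^4*Q4c)) * hc2'
    -- pass to real parts
    have h9 : 0 ≤ (1+t^2)^2 * (((∑ i : Fin k, ∑ j : Fin k,
        g (v i) (v i) (v j) (v j))).re - Ac.re) :=
      mul_nonneg (by positivity) (by linarith [hAle])
    have hre := congrArg Complex.re hpoly
    simp only [← Complex.ofReal_pow, ← Complex.ofReal_one, ← Complex.ofReal_add,
      Complex.re_ofReal_mul, Complex.sub_re, Complex.add_re] at hre
    rw [hre] at h9
    simp only [Complex.add_re, Complex.sub_re] at h9 ⊢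
    nlinarith [h9]
  have ha2 : 0 ≤ (L2c - L0c - Q0c - Q0c + Q2c).re := quad_coeff_nonneg main
  -- ================= convert a2 ≥ 0 to the goal =================
  have hps := pairswap hsym
  have hQ2' : Q2c = (g (ec a) (ec a) W W + g (ec a) (ec a) W W + g (ec a) (ec a) W W
      + g (ec a) (ec a) W W) + (g W (ec a) W (ec a)
        + (starRingEnd ℂ) (g W (ec a) W (ec a))) := by
    have e1 : g W W (ec a) (ec a) = g (ec a) (ec a) W W := hps W W (ec a) (ec a)
    have e2 : g W (ec a) (ec a) W = g (ec a) (ec a) W W := hsym.1 W (ec a) (ec a) W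
    have e3 : g (ec a) W W (ec a) = g (ec a) (ec a) W W := by
      rw [hps (ec a) W W (ec a)]; exact hsym.1 W (ec a) (ec a) W
    have e4 : g (ec a) W (ec a) W = (starRingEnd ℂ) (g W (ec a) W (ec a)) :=
      hsym.2 (ec a) W (ec a) W
    rw [hQ2c, e1, e2, e3, e4]; ring
  have hL2' : L2c = ∑ j ∈ e, (g (ec j) (ec j) W W + g (ec j) (ec j) W W) := by
    rw [hL2c]
    exact Finset.sum_congr rfl fun j _ => by rw [hps W W (ec j) (ec j)]
  have hL0' : L0c = ∑ j ∈ e, (g (ec j) (ec j) (ec a) (ec a) + g (ec j) (ec j) (ec a) (ec a)) := by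
    rw [hL0c]
    exact Finset.sum_congr rfl fun j _ => by rw [hps (ec a) (ec a) (ec j) (ec j)]
  -- real sums
  have hsplitR : ∀ (φ : Fin k → ℝ), ∑ i : Fin k, φ i = φ a + ∑ i ∈ e, φ i := fun φ =>
    (Finset.add_sum_erase _ φ (Finset.mem_univ a)).symm
  rw [Complex.re_sum, Complex.re_sum,
    hsplitR (fun j => (g (ec j) (ec j) (ec a) (ec a)).re),
    hsplitR (fun j => (g (ec j) (ec j) W W).re)]
  have hL2re : L2c.re = (∑ j ∈ e, (g (ec j) (ec j) W W).re)
      + (∑ j ∈ e, (g (ec j) (ec j) W W).re) := by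
    rw [hL2', Complex.re_sum, ← Finset.sum_add_distrib]
    exact Finset.sum_congr rfl fun j _ => Complex.add_re _ _
  have hL0re : L0c.re = (∑ j ∈ e, (g (ec j) (ec j) (ec a) (ec a)).re)
      + (∑ j ∈ e, (g (ec j) (ec j) (ec a) (ec a)).re) := by
    rw [hL0', Complex.re_sum, ← Finset.sum_add_distrib]
    exact Finset.sum_congr rfl fun j _ => Complex.add_re _ _
  have hQ2re : Q2c.re = (g (ec a) (ec a) W W).re + (g (ec a) (ec a) W W).re
      + (g (ec a) (ec a) W W).re + (g (ec a) (ec a) W W).re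
      + ((g W (ec a) W (ec a)).re + (g W (ec a) W (ec a)).re) := by
    rw [hQ2']
    simp [Complex.add_re, Complex.conj_re]
  simp only [Complex.add_re, Complex.sub_re, hL2re, hL0re, hQ2re] at ha2
  linarith [ha2]

/-- second part of the Ni–Zheng estimate (minimizing case). If the
`k`-dimensional subspace `P` minimizes `s` among all `k`-dimensional subspaces, then for every
orthonormal basis `{E_i}` of `P` and every `Z ∈ P^⊥`,
`Σ_i g(E_i,E_i,Z,Z) ≥ (s(P)/(k+1))·‖Z‖²`. -/
theorem stmt_12 (n k : ℕ) (hk : 1 ≤ k) (hkn : k ≤ n)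
    (g : EuclideanSpace ℂ (Fin n) → EuclideanSpace ℂ (Fin n) → EuclideanSpace ℂ (Fin n) →
      EuclideanSpace ℂ (Fin n) → ℂ)
    (hg : CurvatureType g) (hsym : KahlerSymmetries g)
    (P : Submodule ℂ (EuclideanSpace ℂ (Fin n))) (hP : Module.finrank ℂ P = k)
    (hmin :
      ∀ (E : OrthonormalBasis (Fin k) ℂ P) (Q : Submodule ℂ (EuclideanSpace ℂ (Fin n))),
        Module.finrank ℂ Q = k → ∀ E' : OrthonormalBasis (Fin k) ℂ Q,
        (∑ i : Fin k, ∑ j : Fin k, g (E i) (E i) (E j) (E j)).re ≤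
          (∑ i : Fin k, ∑ j : Fin k, g (E' i) (E' i) (E' j) (E' j)).re)
    (E : OrthonormalBasis (Fin k) ℂ P)
    (Z : EuclideanSpace ℂ (Fin n)) (hZ : Z ∈ Pᗮ) :
    ((∑ i : Fin k, ∑ j : Fin k, g (E i) (E i) (E j) (E j)).re / ((k : ℝ) + 1)) * ‖Z‖ ^ 2 ≤
      (∑ i : Fin k, g (E i) (E i) Z Z).re := by
  classical
  have h1k : (0:ℝ) < (k:ℝ) + 1 := by positivity
  rcases eq_or_ne Z 0 with rfl | hZ0
  · simp [g_zero3 hg]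
  · have hr0 : 0 < ‖Z‖ := norm_pos_iff.mpr hZ0
    set r : ℝ := ‖Z‖ with hr
    set Z0 : EuclideanSpace ℂ (Fin n) := ((r⁻¹ : ℝ) : ℂ) • Z with hZ0def
    have hZ0P : Z0 ∈ Pᗮ := Submodule.smul_mem _ _ hZ
    have hZ0n : ‖Z0‖ = 1 := by
      rw [hZ0def, norm_smul, ← hr]
      simp only [Complex.norm_real, Real.norm_eq_abs, abs_of_pos (inv_pos.mpr hr0)]
      exact inv_mul_cancel₀ hr0.ne'
    have hZr : Z = ((r:ℝ):ℂ) • Z0 := by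
      rw [hZ0def, smul_smul, show ((r:ℝ):ℂ) * ((r⁻¹:ℝ):ℂ) = 1 by
        rw [← Complex.ofReal_mul, mul_inv_cancel₀ hr0.ne', Complex.ofReal_one], one_smul]
    set B0 : ℝ := (∑ j : Fin k, g (E j) (E j) Z0 Z0).re with hB0
    have keyA : ∀ a : Fin k,
        (∑ j : Fin k, g (E j) (E j) (E a) (E a)).re ≤
          B0 + (g (E a) (E a) Z0 Z0).re := by
      intro a
      set G : ℂ := g Z0 ↑(E a) Z0 ↑(E a) with hG
      obtain ⟨ζ, hζ⟩ := IsAlgClosed.exists_pow_nat_eq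
        (if G = 0 then 1 else -((‖G‖ : ℝ) : ℂ) / G) zero_lt_two
      have habs1 : ‖(if G = 0 then (1:ℂ) else -((‖G‖ : ℝ) : ℂ) / G)‖ = 1 := by
        rcases eq_or_ne G 0 with h0 | h0
        · rw [if_pos h0]; simp
        · rw [if_neg h0, norm_div, norm_neg, Complex.norm_real, Real.norm_eq_abs,
            abs_of_nonneg (norm_nonneg G)]
          exact div_self (norm_ne_zero_iff.mpr h0)
      have hζabs : ‖ζ‖ = 1 := by
        have h2 := congrArg (fun x : ℂ => ‖x‖) hζ
        simp only [norm_pow, habs1] at h2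
        nlinarith [norm_nonneg ζ]
      have hζG : ζ^2 * G = -((‖G‖ : ℝ) : ℂ) := by
        rcases eq_or_ne G 0 with h0 | h0
        · rw [h0]; simp [h0]
        · rw [hζ, if_neg h0]; field_simp
      have hζ1 : ζ * (starRingEnd ℂ) ζ = 1 := by
        rw [Complex.mul_conj, Complex.normSq_eq_norm_sq, hζabs]; norm_num
      set W : EuclideanSpace ℂ (Fin n) := ζ • Z0 with hWdef
      have hWP : W ∈ Pᗮ := Submodule.smul_mem _ _ hZ0P
      have hWn : ‖W‖ = 1 := by
        rw [hWdef, norm_smul, hZ0n, hζabs]; ring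
      have hkey := key_ineq n k g hg hsym P hmin E a W hWP hWn
      have hgW : ∀ X Y, g X Y W W = g X Y Z0 Z0 := fun X Y => by
        rw [hWdef, gsmul34 hg, hζ1, one_mul]
      have hWaWa : g W ↑(E a) W ↑(E a) = -((‖G‖ : ℝ) : ℂ) := by
        have h3 : g W ↑(E a) W ↑(E a) = ζ^2 * G := by
          rw [hWdef, hg.2.1, hg.2.2.2.2.2.1, hG]; ring
        rw [h3, hζG]
      rw [show (∑ j : Fin k, g (E j) (E j) W W) = ∑ j : Fin k, g (E j) (E j) Z0 Z0 from
        Finset.sum_congr rfl fun j _ => hgW _ _, hgW, hWaWa] at hkey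
      have h4 : (-((‖G‖ : ℝ) : ℂ)).re ≤ 0 := by
        simp [norm_nonneg G]
      rw [← hB0] at hkey
      linarith [hkey, h4]
    -- summing over a
    have hsum : (∑ i : Fin k, ∑ j : Fin k, g (E i) (E i) (E j) (E j)).re ≤
        ((k:ℝ) + 1) * B0 := by
      calc (∑ i : Fin k, ∑ j : Fin k, g (E i) (E i) (E j) (E j)).re
          = (∑ a : Fin k, ∑ j : Fin k, g (E j) (E j) (E a) (E a)).re := by
            rw [Finset.sum_comm]
        _ = ∑ a : Fin k, (∑ j : Fin k, g (E j) (E j) (E a) (E a)).re := by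
            rw [Complex.re_sum]
        _ ≤ ∑ a : Fin k, (B0 + (g (E a) (E a) Z0 Z0).re) :=
            Finset.sum_le_sum fun a _ => keyA a
        _ = (k:ℝ) * B0 + ∑ a : Fin k, (g (E a) (E a) Z0 Z0).re := by
            rw [Finset.sum_add_distrib, Finset.sum_const, Finset.card_univ, Fintype.card_fin,
              nsmul_eq_mul]
        _ = (k:ℝ) * B0 + B0 := by rw [hB0, Complex.re_sum]
        _ = ((k:ℝ) + 1) * B0 := by ring
    -- rewriting the right-hand side
    have hterm : ∀ X Y, g X Y Z Z = ((r^2 : ℝ):ℂ) * g X Y Z0 Z0 := by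
      intro X Y
      rw [hZr, gsmul34 hg, Complex.conj_ofReal]
      push_cast; ring
    have hZeq : (∑ i : Fin k, g (E i) (E i) Z Z).re = r^2 * B0 := by
      rw [show (∑ i : Fin k, g (E i) (E i) Z Z) =
          ((r^2 : ℝ):ℂ) * ∑ i : Fin k, g (E i) (E i) Z0 Z0 from by
        rw [Finset.mul_sum]; exact Finset.sum_congr rfl fun i _ => hterm _ _,
        Complex.re_ofReal_mul, hB0]
    rw [hZeq]
    have h5 : (∑ i : Fin k, ∑ j : Fin k, g (E i) (E i) (E j) (E j)).re / ((k:ℝ)+1) ≤ B0 := by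
      rw [div_le_iff₀ h1k]; linarith
    nlinarith [sq_nonneg r, mul_le_mul_of_nonneg_right h5 (sq_nonneg r)]
end

section
/- Let 1 ≤ k ≤ n, let g : (ℂ^n)^4 → ℂ be quadrilinear of curvature type satisfying the Kähler-type symmetries, and let Σ ⊆ ℂ^n be a k-dimensional complex subspace that maximizes s among all k-dimensional complex subspaces of ℂ^n. Then for every orthonormal basis {E_1,…,E_k} of Σ and every Z ∈ Σ^⊥, the (real) number Σ_{i=1}^k g(E_i,E_i,Z,Z) satisfies Σ_{i=1}^k g(E_i,E_i,Z,Z) ≤ (s(Σ)/(k+1)) · ‖Z‖². -/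
open Finset in
private lemma dsplit13 {β : Type*} [AddCommMonoid β] {k : ℕ} (i₀ : Fin k) (T : Fin k → Fin k → β) :
    ∑ i, ∑ j, T i j =
      ((∑ i ∈ univ.erase i₀, ∑ j ∈ univ.erase i₀, T i j) + (∑ i ∈ univ.erase i₀, T i i₀)) +
      ((∑ j ∈ univ.erase i₀, T i₀ j) + T i₀ i₀) := by
  simp only [← Finset.sum_erase_add Finset.univ _ (Finset.mem_univ i₀), Finset.sum_add_distrib]

open Finset in
private lemma expand13 {H : Type*} [AddCommGroup H] [Module ℂ H] (g : H → H → H → H → ℂ)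
    (hg : CurvatureType g) {k : ℕ} (i₀ : Fin k) (e : Fin k → H) (u : H) (c σ : ℂ) :
    (∑ i : Fin k, ∑ j : Fin k,
      g (if i = i₀ then c • e i₀ + σ • u else e i) (if i = i₀ then c • e i₀ + σ • u else e i)
        (if j = i₀ then c • e i₀ + σ • u else e j) (if j = i₀ then c • e i₀ + σ • u else e j))
    = (∑ i ∈ univ.erase i₀, ∑ j ∈ univ.erase i₀, g (e i) (e i) (e j) (e j))
      + (c * (starRingEnd ℂ) c) *
          ((∑ j ∈ univ.erase i₀, g (e i₀) (e i₀) (e j) (e j)) +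
           (∑ i ∈ univ.erase i₀, g (e i) (e i) (e i₀) (e i₀)))
      + (c * (starRingEnd ℂ) σ) *
          ((∑ j ∈ univ.erase i₀, g (e i₀) u (e j) (e j)) +
           (∑ i ∈ univ.erase i₀, g (e i) (e i) (e i₀) u))
      + (σ * (starRingEnd ℂ) c) *
          ((∑ j ∈ univ.erase i₀, g u (e i₀) (e j) (e j)) +
           (∑ i ∈ univ.erase i₀, g (e i) (e i) u (e i₀)))
      + (σ * (starRingEnd ℂ) σ) *
          ((∑ j ∈ univ.erase i₀, g u u (e j) (e j)) +
           (∑ i ∈ univ.erase i₀, g (e i) (e i) u u))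
      + (c * (starRingEnd ℂ) c) * (c * (starRingEnd ℂ) c) * g (e i₀) (e i₀) (e i₀) (e i₀)
      + (σ * (starRingEnd ℂ) c) * (c * (starRingEnd ℂ) c) * g u (e i₀) (e i₀) (e i₀)
      + (c * (starRingEnd ℂ) σ) * (c * (starRingEnd ℂ) c) * g (e i₀) u (e i₀) (e i₀)
      + (c * (starRingEnd ℂ) c) * (σ * (starRingEnd ℂ) c) * g (e i₀) (e i₀) u (e i₀)
      + (c * (starRingEnd ℂ) c) * (c * (starRingEnd ℂ) σ) * g (e i₀) (e i₀) (e i₀) u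
      + (σ * (starRingEnd ℂ) σ) * (c * (starRingEnd ℂ) c) * g u u (e i₀) (e i₀)
      + (c * (starRingEnd ℂ) c) * (σ * (starRingEnd ℂ) σ) * g (e i₀) (e i₀) u u
      + (σ * (starRingEnd ℂ) c) * (c * (starRingEnd ℂ) σ) * g u (e i₀) (e i₀) u
      + (c * (starRingEnd ℂ) σ) * (σ * (starRingEnd ℂ) c) * g (e i₀) u u (e i₀)
      + (σ * (starRingEnd ℂ) c) * (σ * (starRingEnd ℂ) c) * g u (e i₀) u (e i₀)
      + (c * (starRingEnd ℂ) σ) * (c * (starRingEnd ℂ) σ) * g (e i₀) u (e i₀) u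
      + (c * (starRingEnd ℂ) σ) * (σ * (starRingEnd ℂ) σ) * g (e i₀) u u u
      + (σ * (starRingEnd ℂ) c) * (σ * (starRingEnd ℂ) σ) * g u (e i₀) u u
      + (σ * (starRingEnd ℂ) σ) * (c * (starRingEnd ℂ) σ) * g u u (e i₀) u
      + (σ * (starRingEnd ℂ) σ) * (σ * (starRingEnd ℂ) c) * g u u u (e i₀)
      + (σ * (starRingEnd ℂ) σ) * (σ * (starRingEnd ℂ) σ) * g u u u u := by
  classical
  obtain ⟨g1, g2, g3, g4, g5, g6, g7, g8⟩ := hg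
  set v := c • e i₀ + σ • u with hv
  have key12 : ∀ x y, g v v x y =
      (c * (starRingEnd ℂ) c) * g (e i₀) (e i₀) x y + (c * (starRingEnd ℂ) σ) * g (e i₀) u x y
      + (σ * (starRingEnd ℂ) c) * g u (e i₀) x y + (σ * (starRingEnd ℂ) σ) * g u u x y := by
    intro x y
    rw [hv]
    simp only [g1, g2, g3, g4]
    ring
  have key34 : ∀ x y, g x y v v =
      (c * (starRingEnd ℂ) c) * g x y (e i₀) (e i₀) + (c * (starRingEnd ℂ) σ) * g x y (e i₀) u
      + (σ * (starRingEnd ℂ) c) * g x y u (e i₀) + (σ * (starRingEnd ℂ) σ) * g x y u u := by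
    intro x y
    rw [hv]
    simp only [g5, g6, g7, g8]
    ring
  refine (dsplit13 i₀ _).trans ?_
  have h1 : (∑ i ∈ univ.erase i₀, ∑ j ∈ univ.erase i₀,
      g (if i = i₀ then v else e i) (if i = i₀ then v else e i)
        (if j = i₀ then v else e j) (if j = i₀ then v else e j))
      = ∑ i ∈ univ.erase i₀, ∑ j ∈ univ.erase i₀, g (e i) (e i) (e j) (e j) :=
    Finset.sum_congr rfl fun i hi => Finset.sum_congr rfl fun j hj => by
      rw [if_neg (Finset.ne_of_mem_erase hi), if_neg (Finset.ne_of_mem_erase hj)]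
  have h2 : (∑ i ∈ univ.erase i₀,
      g (if i = i₀ then v else e i) (if i = i₀ then v else e i)
        (if i₀ = i₀ then v else e i₀) (if i₀ = i₀ then v else e i₀))
      = ∑ i ∈ univ.erase i₀, g (e i) (e i) v v :=
    Finset.sum_congr rfl fun i hi => by
      rw [if_neg (Finset.ne_of_mem_erase hi), if_pos rfl]
  have h3 : (∑ j ∈ univ.erase i₀,
      g (if i₀ = i₀ then v else e i₀) (if i₀ = i₀ then v else e i₀)
        (if j = i₀ then v else e j) (if j = i₀ then v else e j))
      = ∑ j ∈ univ.erase i₀, g v v (e j) (e j) :=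
    Finset.sum_congr rfl fun j hj => by
      rw [if_neg (Finset.ne_of_mem_erase hj), if_pos rfl]
  rw [h1, h2, h3, if_pos rfl]
  simp only [key12, key34, Finset.sum_add_distrib, ← Finset.mul_sum]
  ring

private lemma quadsum13 (s r₀ : ℝ) (hr2 : r₀ * r₀ = 1 - s ^ 2)
    (K SA SB SC SD A U1 U2 U3 U4 W1 W2 W3 W4 D1 D2 T1 T2 T3 T4 B : ℂ) :
    (K + ((r₀:ℂ) * (starRingEnd ℂ) (r₀:ℂ)) * SA + ((r₀:ℂ) * (starRingEnd ℂ) ((s:ℂ))) * SB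
      + (((s:ℂ)) * (starRingEnd ℂ) (r₀:ℂ)) * SC + (((s:ℂ)) * (starRingEnd ℂ) ((s:ℂ))) * SD
      + ((r₀:ℂ) * (starRingEnd ℂ) (r₀:ℂ)) * ((r₀:ℂ) * (starRingEnd ℂ) (r₀:ℂ)) * A
      + (((s:ℂ)) * (starRingEnd ℂ) (r₀:ℂ)) * ((r₀:ℂ) * (starRingEnd ℂ) (r₀:ℂ)) * U1
      + ((r₀:ℂ) * (starRingEnd ℂ) ((s:ℂ))) * ((r₀:ℂ) * (starRingEnd ℂ) (r₀:ℂ)) * U2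
      + ((r₀:ℂ) * (starRingEnd ℂ) (r₀:ℂ)) * (((s:ℂ)) * (starRingEnd ℂ) (r₀:ℂ)) * U3
      + ((r₀:ℂ) * (starRingEnd ℂ) (r₀:ℂ)) * ((r₀:ℂ) * (starRingEnd ℂ) ((s:ℂ))) * U4
      + (((s:ℂ)) * (starRingEnd ℂ) ((s:ℂ))) * ((r₀:ℂ) * (starRingEnd ℂ) (r₀:ℂ)) * W1
      + ((r₀:ℂ) * (starRingEnd ℂ) (r₀:ℂ)) * (((s:ℂ)) * (starRingEnd ℂ) ((s:ℂ))) * W2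
      + (((s:ℂ)) * (starRingEnd ℂ) (r₀:ℂ)) * ((r₀:ℂ) * (starRingEnd ℂ) ((s:ℂ))) * W3
      + ((r₀:ℂ) * (starRingEnd ℂ) ((s:ℂ))) * (((s:ℂ)) * (starRingEnd ℂ) (r₀:ℂ)) * W4
      + (((s:ℂ)) * (starRingEnd ℂ) (r₀:ℂ)) * (((s:ℂ)) * (starRingEnd ℂ) (r₀:ℂ)) * D1
      + ((r₀:ℂ) * (starRingEnd ℂ) ((s:ℂ))) * ((r₀:ℂ) * (starRingEnd ℂ) ((s:ℂ))) * D2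
      + ((r₀:ℂ) * (starRingEnd ℂ) ((s:ℂ))) * (((s:ℂ)) * (starRingEnd ℂ) ((s:ℂ))) * T1
      + (((s:ℂ)) * (starRingEnd ℂ) (r₀:ℂ)) * (((s:ℂ)) * (starRingEnd ℂ) ((s:ℂ))) * T2
      + (((s:ℂ)) * (starRingEnd ℂ) ((s:ℂ))) * ((r₀:ℂ) * (starRingEnd ℂ) ((s:ℂ))) * T3
      + (((s:ℂ)) * (starRingEnd ℂ) ((s:ℂ))) * (((s:ℂ)) * (starRingEnd ℂ) (r₀:ℂ)) * T4
      + (((s:ℂ)) * (starRingEnd ℂ) ((s:ℂ))) * (((s:ℂ)) * (starRingEnd ℂ) ((s:ℂ))) * B)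
    + (K + ((r₀:ℂ) * (starRingEnd ℂ) (r₀:ℂ)) * SA + ((r₀:ℂ) * (starRingEnd ℂ) (-(s:ℂ))) * SB
      + ((-(s:ℂ)) * (starRingEnd ℂ) (r₀:ℂ)) * SC + ((-(s:ℂ)) * (starRingEnd ℂ) (-(s:ℂ))) * SD
      + ((r₀:ℂ) * (starRingEnd ℂ) (r₀:ℂ)) * ((r₀:ℂ) * (starRingEnd ℂ) (r₀:ℂ)) * A
      + ((-(s:ℂ)) * (starRingEnd ℂ) (r₀:ℂ)) * ((r₀:ℂ) * (starRingEnd ℂ) (r₀:ℂ)) * U1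
      + ((r₀:ℂ) * (starRingEnd ℂ) (-(s:ℂ))) * ((r₀:ℂ) * (starRingEnd ℂ) (r₀:ℂ)) * U2
      + ((r₀:ℂ) * (starRingEnd ℂ) (r₀:ℂ)) * ((-(s:ℂ)) * (starRingEnd ℂ) (r₀:ℂ)) * U3
      + ((r₀:ℂ) * (starRingEnd ℂ) (r₀:ℂ)) * ((r₀:ℂ) * (starRingEnd ℂ) (-(s:ℂ))) * U4
      + ((-(s:ℂ)) * (starRingEnd ℂ) (-(s:ℂ))) * ((r₀:ℂ) * (starRingEnd ℂ) (r₀:ℂ)) * W1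
      + ((r₀:ℂ) * (starRingEnd ℂ) (r₀:ℂ)) * ((-(s:ℂ)) * (starRingEnd ℂ) (-(s:ℂ))) * W2
      + ((-(s:ℂ)) * (starRingEnd ℂ) (r₀:ℂ)) * ((r₀:ℂ) * (starRingEnd ℂ) (-(s:ℂ))) * W3
      + ((r₀:ℂ) * (starRingEnd ℂ) (-(s:ℂ))) * ((-(s:ℂ)) * (starRingEnd ℂ) (r₀:ℂ)) * W4
      + ((-(s:ℂ)) * (starRingEnd ℂ) (r₀:ℂ)) * ((-(s:ℂ)) * (starRingEnd ℂ) (r₀:ℂ)) * D1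
      + ((r₀:ℂ) * (starRingEnd ℂ) (-(s:ℂ))) * ((r₀:ℂ) * (starRingEnd ℂ) (-(s:ℂ))) * D2
      + ((r₀:ℂ) * (starRingEnd ℂ) (-(s:ℂ))) * ((-(s:ℂ)) * (starRingEnd ℂ) (-(s:ℂ))) * T1
      + ((-(s:ℂ)) * (starRingEnd ℂ) (r₀:ℂ)) * ((-(s:ℂ)) * (starRingEnd ℂ) (-(s:ℂ))) * T2
      + ((-(s:ℂ)) * (starRingEnd ℂ) (-(s:ℂ))) * ((r₀:ℂ) * (starRingEnd ℂ) (-(s:ℂ))) * T3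
      + ((-(s:ℂ)) * (starRingEnd ℂ) (-(s:ℂ))) * ((-(s:ℂ)) * (starRingEnd ℂ) (r₀:ℂ)) * T4
      + ((-(s:ℂ)) * (starRingEnd ℂ) (-(s:ℂ))) * ((-(s:ℂ)) * (starRingEnd ℂ) (-(s:ℂ))) * B)
    + (K + ((r₀:ℂ) * (starRingEnd ℂ) (r₀:ℂ)) * SA
      + ((r₀:ℂ) * (starRingEnd ℂ) ((s:ℂ) * Complex.I)) * SB
      + (((s:ℂ) * Complex.I) * (starRingEnd ℂ) (r₀:ℂ)) * SC
      + (((s:ℂ) * Complex.I) * (starRingEnd ℂ) ((s:ℂ) * Complex.I)) * SD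
      + ((r₀:ℂ) * (starRingEnd ℂ) (r₀:ℂ)) * ((r₀:ℂ) * (starRingEnd ℂ) (r₀:ℂ)) * A
      + (((s:ℂ) * Complex.I) * (starRingEnd ℂ) (r₀:ℂ)) * ((r₀:ℂ) * (starRingEnd ℂ) (r₀:ℂ)) * U1
      + ((r₀:ℂ) * (starRingEnd ℂ) ((s:ℂ) * Complex.I)) * ((r₀:ℂ) * (starRingEnd ℂ) (r₀:ℂ)) * U2
      + ((r₀:ℂ) * (starRingEnd ℂ) (r₀:ℂ)) * (((s:ℂ) * Complex.I) * (starRingEnd ℂ) (r₀:ℂ)) * U3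
      + ((r₀:ℂ) * (starRingEnd ℂ) (r₀:ℂ)) * ((r₀:ℂ) * (starRingEnd ℂ) ((s:ℂ) * Complex.I)) * U4
      + (((s:ℂ) * Complex.I) * (starRingEnd ℂ) ((s:ℂ) * Complex.I)) *
          ((r₀:ℂ) * (starRingEnd ℂ) (r₀:ℂ)) * W1
      + ((r₀:ℂ) * (starRingEnd ℂ) (r₀:ℂ)) *
          (((s:ℂ) * Complex.I) * (starRingEnd ℂ) ((s:ℂ) * Complex.I)) * W2
      + (((s:ℂ) * Complex.I) * (starRingEnd ℂ) (r₀:ℂ)) *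
          ((r₀:ℂ) * (starRingEnd ℂ) ((s:ℂ) * Complex.I)) * W3
      + ((r₀:ℂ) * (starRingEnd ℂ) ((s:ℂ) * Complex.I)) *
          (((s:ℂ) * Complex.I) * (starRingEnd ℂ) (r₀:ℂ)) * W4
      + (((s:ℂ) * Complex.I) * (starRingEnd ℂ) (r₀:ℂ)) *
          (((s:ℂ) * Complex.I) * (starRingEnd ℂ) (r₀:ℂ)) * D1
      + ((r₀:ℂ) * (starRingEnd ℂ) ((s:ℂ) * Complex.I)) *
          ((r₀:ℂ) * (starRingEnd ℂ) ((s:ℂ) * Complex.I)) * D2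
      + ((r₀:ℂ) * (starRingEnd ℂ) ((s:ℂ) * Complex.I)) *
          (((s:ℂ) * Complex.I) * (starRingEnd ℂ) ((s:ℂ) * Complex.I)) * T1
      + (((s:ℂ) * Complex.I) * (starRingEnd ℂ) (r₀:ℂ)) *
          (((s:ℂ) * Complex.I) * (starRingEnd ℂ) ((s:ℂ) * Complex.I)) * T2
      + (((s:ℂ) * Complex.I) * (starRingEnd ℂ) ((s:ℂ) * Complex.I)) *
          ((r₀:ℂ) * (starRingEnd ℂ) ((s:ℂ) * Complex.I)) * T3
      + (((s:ℂ) * Complex.I) * (starRingEnd ℂ) ((s:ℂ) * Complex.I)) *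
          (((s:ℂ) * Complex.I) * (starRingEnd ℂ) (r₀:ℂ)) * T4
      + (((s:ℂ) * Complex.I) * (starRingEnd ℂ) ((s:ℂ) * Complex.I)) *
          (((s:ℂ) * Complex.I) * (starRingEnd ℂ) ((s:ℂ) * Complex.I)) * B)
    + (K + ((r₀:ℂ) * (starRingEnd ℂ) (r₀:ℂ)) * SA
      + ((r₀:ℂ) * (starRingEnd ℂ) (-((s:ℂ) * Complex.I))) * SB
      + ((-((s:ℂ) * Complex.I)) * (starRingEnd ℂ) (r₀:ℂ)) * SC
      + ((-((s:ℂ) * Complex.I)) * (starRingEnd ℂ) (-((s:ℂ) * Complex.I))) * SD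
      + ((r₀:ℂ) * (starRingEnd ℂ) (r₀:ℂ)) * ((r₀:ℂ) * (starRingEnd ℂ) (r₀:ℂ)) * A
      + ((-((s:ℂ) * Complex.I)) * (starRingEnd ℂ) (r₀:ℂ)) *
          ((r₀:ℂ) * (starRingEnd ℂ) (r₀:ℂ)) * U1
      + ((r₀:ℂ) * (starRingEnd ℂ) (-((s:ℂ) * Complex.I))) *
          ((r₀:ℂ) * (starRingEnd ℂ) (r₀:ℂ)) * U2
      + ((r₀:ℂ) * (starRingEnd ℂ) (r₀:ℂ)) *
          ((-((s:ℂ) * Complex.I)) * (starRingEnd ℂ) (r₀:ℂ)) * U3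
      + ((r₀:ℂ) * (starRingEnd ℂ) (r₀:ℂ)) *
          ((r₀:ℂ) * (starRingEnd ℂ) (-((s:ℂ) * Complex.I))) * U4
      + ((-((s:ℂ) * Complex.I)) * (starRingEnd ℂ) (-((s:ℂ) * Complex.I))) *
          ((r₀:ℂ) * (starRingEnd ℂ) (r₀:ℂ)) * W1
      + ((r₀:ℂ) * (starRingEnd ℂ) (r₀:ℂ)) *
          ((-((s:ℂ) * Complex.I)) * (starRingEnd ℂ) (-((s:ℂ) * Complex.I))) * W2
      + ((-((s:ℂ) * Complex.I)) * (starRingEnd ℂ) (r₀:ℂ)) *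
          ((r₀:ℂ) * (starRingEnd ℂ) (-((s:ℂ) * Complex.I))) * W3
      + ((r₀:ℂ) * (starRingEnd ℂ) (-((s:ℂ) * Complex.I))) *
          ((-((s:ℂ) * Complex.I)) * (starRingEnd ℂ) (r₀:ℂ)) * W4
      + ((-((s:ℂ) * Complex.I)) * (starRingEnd ℂ) (r₀:ℂ)) *
          ((-((s:ℂ) * Complex.I)) * (starRingEnd ℂ) (r₀:ℂ)) * D1
      + ((r₀:ℂ) * (starRingEnd ℂ) (-((s:ℂ) * Complex.I))) *
          ((r₀:ℂ) * (starRingEnd ℂ) (-((s:ℂ) * Complex.I))) * D2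
      + ((r₀:ℂ) * (starRingEnd ℂ) (-((s:ℂ) * Complex.I))) *
          ((-((s:ℂ) * Complex.I)) * (starRingEnd ℂ) (-((s:ℂ) * Complex.I))) * T1
      + ((-((s:ℂ) * Complex.I)) * (starRingEnd ℂ) (r₀:ℂ)) *
          ((-((s:ℂ) * Complex.I)) * (starRingEnd ℂ) (-((s:ℂ) * Complex.I))) * T2
      + ((-((s:ℂ) * Complex.I)) * (starRingEnd ℂ) (-((s:ℂ) * Complex.I))) *
          ((r₀:ℂ) * (starRingEnd ℂ) (-((s:ℂ) * Complex.I))) * T3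
      + ((-((s:ℂ) * Complex.I)) * (starRingEnd ℂ) (-((s:ℂ) * Complex.I))) *
          ((-((s:ℂ) * Complex.I)) * (starRingEnd ℂ) (r₀:ℂ)) * T4
      + ((-((s:ℂ) * Complex.I)) * (starRingEnd ℂ) (-((s:ℂ) * Complex.I))) *
          ((-((s:ℂ) * Complex.I)) * (starRingEnd ℂ) (-((s:ℂ) * Complex.I))) * B)
    = ((4:ℝ):ℂ) * K + ((4*(1-s^2):ℝ):ℂ) * SA + ((4*s^2:ℝ):ℂ) * SD
      + ((4*(1-s^2)^2:ℝ):ℂ) * A + ((4*(1-s^2)*s^2:ℝ):ℂ) * (W1 + W2 + W3 + W4)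
      + ((4*s^2*s^2:ℝ):ℂ) * B := by
  have hkey : ((r₀:ℂ)) * ((r₀:ℂ)) = 1 - (s:ℂ) * (s:ℂ) := by
    rw [← Complex.ofReal_mul, hr2]; push_cast; ring
  simp only [map_mul, map_neg, Complex.conj_ofReal, Complex.conj_I]
  linear_combination (norm := (push_cast; ring1))
    ((-2) * ((s:ℂ) * (s:ℂ)) * SD
      + (-2) * (((r₀:ℂ) * (r₀:ℂ)) * ((s:ℂ) * (s:ℂ))) * (W1 + W2 + W3 + W4)
      + 2 * (((r₀:ℂ) * (r₀:ℂ)) * ((s:ℂ) * (s:ℂ))) * (D1 + D2)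
      + 2 * (((s:ℂ) * (s:ℂ)) * ((s:ℂ) * (s:ℂ))) * (Complex.I^2 - 1) * B) * Complex.I_sq
    + (4 * SA + 4 * (((r₀:ℂ) * (r₀:ℂ)) + (1 - (s:ℂ) * (s:ℂ))) * A
      + 4 * ((s:ℂ) * (s:ℂ)) * (W1 + W2 + W3 + W4)) * hkey

open scoped ComplexInnerProductSpace in
private lemma orthoF13 {H : Type*} [NormedAddCommGroup H] [InnerProductSpace ℂ H] {k : ℕ}
    (e : Fin k → H) (he : Orthonormal ℂ e) (u : H)
    (hu : ⟪u, u⟫ = 1) (heu : ∀ i, ⟪e i, u⟫ = 0) (hue : ∀ i, ⟪u, e i⟫ = 0)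
    (i₀ : Fin k) (c σ : ℂ) (hcs : (starRingEnd ℂ) c * c + (starRingEnd ℂ) σ * σ = 1) :
    Orthonormal ℂ (fun j => if j = i₀ then c • e i₀ + σ • u else e j) := by
  rw [orthonormal_iff_ite]
  have hee := orthonormal_iff_ite.mp he
  intro i j
  by_cases hi : i = i₀ <;> by_cases hj : j = i₀
  · have hij : i = j := hi.trans hj.symm
    simp only [hi, hj, if_pos rfl, ite_true, inner_add_left, inner_add_right, inner_smul_left,
      inner_smul_right, hee, hu, heu, hue, mul_zero, mul_one, add_zero, zero_add, hij]
    linear_combination hcs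
  · have hij : ¬ i = j := fun h => hj (h.symm.trans hi)
    have hj' : ¬ i₀ = j := fun h => hj h.symm
    simp [hi, if_neg hj, if_neg hij, if_neg hj', inner_add_left, inner_smul_left, hue, hee]
  · have hij : ¬ i = j := fun h => hi (h.trans hj)
    have hi' : ¬ i = i₀ := hi
    simp [hj, if_neg hi, if_neg hij, if_neg hi', inner_add_right, inner_smul_right, heu, hee]
  · simp [if_neg hi, if_neg hj, hee]

private lemma transfer13 {H : Type*} [NormedAddCommGroup H] [InnerProductSpace ℂ H] {k : ℕ}
    (F : Fin k → H) (hF : Orthonormal ℂ F) :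
    ∃ (Q : Submodule ℂ H) (B : OrthonormalBasis (Fin k) ℂ Q),
      Module.finrank ℂ Q = k ∧ ∀ i, (B i : H) = F i := by
  classical
  refine ⟨Submodule.span ℂ (↑(Finset.univ.image F) : Set H),
    (OrthonormalBasis.span hF Finset.univ).reindex (Equiv.subtypeUnivEquiv Finset.mem_univ),
    ?_, ?_⟩
  · have hset : (↑(Finset.univ.image F) : Set H) = Set.range F := by
      simp [Finset.coe_image]
    rw [hset, finrank_span_eq_card hF.linearIndependent, Fintype.card_fin]
  · intro i
    simp [OrthonormalBasis.reindex_apply, OrthonormalBasis.span_apply]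

private lemma reswap13_re {H : Type*} [AddCommGroup H] [Module ℂ H] {g : H → H → H → H → ℂ}
    (hsym : KahlerSymmetries g) (x y : H) : (g x x y y).re = (g y y x x).re := by
  rw [hsym.1 x x y y, hsym.2 y x x y, hsym.1 x y y x, Complex.conj_re]

private lemma limarg13 {L M : ℝ} (h : ∀ s : ℝ, 0 < s → s < 1 → s ^ 2 * L + s ^ 4 * M ≤ 0) :
    L ≤ 0 := by
  have h' : ∀ s : ℝ, 0 < s → s < 1 → L + s ^ 2 * M ≤ 0 := by
    intro s hs0 hs1
    have hs2 : 0 < s ^ 2 := by positivity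
    nlinarith [h s hs0 hs1]
  by_contra h0
  push_neg at h0
  set s : ℝ := min (1/2) (Real.sqrt (L / (|M| + 1))) with hs
  have hM : (0:ℝ) < |M| + 1 := by positivity
  have harg : 0 < L / (|M| + 1) := by positivity
  have hs0 : 0 < s := lt_min (by norm_num) (Real.sqrt_pos.mpr harg)
  have hs1 : s < 1 := lt_of_le_of_lt (min_le_left _ _) (by norm_num)
  have hsq : s ^ 2 ≤ L / (|M| + 1) := by
    have h1 : s ≤ Real.sqrt (L / (|M| + 1)) := min_le_right _ _
    have := Real.sq_sqrt harg.le
    nlinarith [Real.sqrt_nonneg (L / (|M| + 1))]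
  have hd : L / (|M| + 1) * (|M| + 1) = L := div_mul_cancel₀ _ hM.ne'
  have hMa : -(s ^ 2 * M) ≤ s ^ 2 * |M| := by
    have := neg_abs_le M
    nlinarith [sq_nonneg s, abs_nonneg M]
  have hlt : s ^ 2 * |M| < L := by
    have h2 : s ^ 2 * |M| ≤ L / (|M| + 1) * |M| := by nlinarith [abs_nonneg M]
    nlinarith [abs_nonneg M]
  have := h' s hs0 hs1
  linarith

open Finset in
open scoped ComplexInnerProductSpace in
private lemma mainlem13 {H : Type*} [NormedAddCommGroup H] [InnerProductSpace ℂ H] {k : ℕ}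
    (g : H → H → H → H → ℂ) (hg : CurvatureType g) (hsym : KahlerSymmetries g)
    (e : Fin k → H) (he : Orthonormal ℂ e)
    (hmax' : ∀ F : Fin k → H, Orthonormal ℂ F →
      (∑ i, ∑ j, g (F i) (F i) (F j) (F j)).re ≤ (∑ i, ∑ j, g (e i) (e i) (e j) (e j)).re)
    (u : H) (hu : ⟪u, u⟫ = 1) (heu : ∀ i, ⟪e i, u⟫ = 0) (hue : ∀ i, ⟪u, e i⟫ = 0) :
    ((k : ℝ) + 1) * (∑ i, (g (e i) (e i) u u).re) ≤
      (∑ i, ∑ j, g (e i) (e i) (e j) (e j)).re := by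
  classical
  have key : ∀ i₀ : Fin k,
      (∑ i, (g (e i) (e i) u u).re) + (g (e i₀) (e i₀) u u).re ≤
        ∑ j, (g (e i₀) (e i₀) (e j) (e j)).re := by
    intro i₀
    -- decomposition of the total sum S
    have hcollapse : ∀ i : Fin k, (if i = i₀ then e i₀ else e i) = e i := by
      intro i; split
      · next h => rw [h]
      · rfl
    have hS0 := expand13 g hg i₀ e u 1 0
    simp only [one_smul, zero_smul, add_zero, hcollapse, map_one, map_zero, mul_zero, zero_mul,
      mul_one, one_mul, zero_add] at hS0
    have hSre := congrArg Complex.re hS0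
    simp only [Complex.add_re] at hSre
    -- the variational step
    have hstep : ∀ s : ℝ, 0 < s → s < 1 →
        s ^ 2 * (((∑ j ∈ univ.erase i₀, g u u (e j) (e j)).re
            + (∑ i ∈ univ.erase i₀, g (e i) (e i) u u).re)
          + ((g u u (e i₀) (e i₀)).re + (g (e i₀) (e i₀) u u).re
            + (g u (e i₀) (e i₀) u).re + (g (e i₀) u u (e i₀)).re)
          - ((∑ j ∈ univ.erase i₀, g (e i₀) (e i₀) (e j) (e j)).re
            + (∑ i ∈ univ.erase i₀, g (e i) (e i) (e i₀) (e i₀)).re)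
          - 2 * (g (e i₀) (e i₀) (e i₀) (e i₀)).re)
        + s ^ 4 * ((g (e i₀) (e i₀) (e i₀) (e i₀)).re
          - ((g u u (e i₀) (e i₀)).re + (g (e i₀) (e i₀) u u).re
            + (g u (e i₀) (e i₀) u).re + (g (e i₀) u u (e i₀)).re)
          + (g u u u u).re) ≤ 0 := by
      intro s hs0 hs1
      have h1s : (0:ℝ) ≤ 1 - s ^ 2 := by nlinarith
      set r₀ : ℝ := Real.sqrt (1 - s ^ 2) with hr₀def
      have hr2 : r₀ * r₀ = 1 - s ^ 2 := by rw [hr₀def]; exact Real.mul_self_sqrt h1s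
      have hkey : ((r₀:ℂ)) * ((r₀:ℂ)) = 1 - (s:ℂ) * (s:ℂ) := by
        rw [← Complex.ofReal_mul, hr2]; push_cast; ring
      have hc1 : (starRingEnd ℂ) ((r₀:ℂ)) * (r₀:ℂ) + (starRingEnd ℂ) ((s:ℂ)) * (s:ℂ) = 1 := by
        simp only [Complex.conj_ofReal]; linear_combination hkey
      have hc2 : (starRingEnd ℂ) ((r₀:ℂ)) * (r₀:ℂ)
          + (starRingEnd ℂ) (-(s:ℂ)) * (-(s:ℂ)) = 1 := by
        simp only [map_neg, Complex.conj_ofReal]; linear_combination hkey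
      have hc3 : (starRingEnd ℂ) ((r₀:ℂ)) * (r₀:ℂ)
          + (starRingEnd ℂ) ((s:ℂ) * Complex.I) * ((s:ℂ) * Complex.I) = 1 := by
        simp only [map_mul, Complex.conj_ofReal, Complex.conj_I]
        linear_combination hkey - ((s:ℂ) * (s:ℂ)) * Complex.I_sq
      have hc4 : (starRingEnd ℂ) ((r₀:ℂ)) * (r₀:ℂ)
          + (starRingEnd ℂ) (-((s:ℂ) * Complex.I)) * (-((s:ℂ) * Complex.I)) = 1 := by
        simp only [map_neg, map_mul, Complex.conj_ofReal, Complex.conj_I]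
        linear_combination hkey - ((s:ℂ) * (s:ℂ)) * Complex.I_sq
      have hXgen : ∀ σ : ℂ,
          (starRingEnd ℂ) ((r₀:ℂ)) * (r₀:ℂ) + (starRingEnd ℂ) σ * σ = 1 →
          (∑ i : Fin k, ∑ j : Fin k,
            g (if i = i₀ then (r₀:ℂ) • e i₀ + σ • u else e i)
              (if i = i₀ then (r₀:ℂ) • e i₀ + σ • u else e i)
              (if j = i₀ then (r₀:ℂ) • e i₀ + σ • u else e j)
              (if j = i₀ then (r₀:ℂ) • e i₀ + σ • u else e j)).re ≤
          (∑ i, ∑ j, g (e i) (e i) (e j) (e j)).re :=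
        fun σ hσ => hmax' _ (orthoF13 e he u hu heu hue i₀ (r₀:ℂ) σ hσ)
      have hX1 := hXgen ((s:ℂ)) hc1
      have hX2 := hXgen (-(s:ℂ)) hc2
      have hX3 := hXgen ((s:ℂ) * Complex.I) hc3
      have hX4 := hXgen (-((s:ℂ) * Complex.I)) hc4
      rw [expand13 g hg i₀ e u ((r₀:ℂ)) ((s:ℂ))] at hX1
      rw [expand13 g hg i₀ e u ((r₀:ℂ)) (-(s:ℂ))] at hX2
      rw [expand13 g hg i₀ e u ((r₀:ℂ)) ((s:ℂ) * Complex.I)] at hX3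
      rw [expand13 g hg i₀ e u ((r₀:ℂ)) (-((s:ℂ) * Complex.I))] at hX4
      simp only [Complex.add_re] at hX1 hX2 hX3 hX4
      have hre := congrArg Complex.re (quadsum13 s r₀ hr2
        (∑ i ∈ univ.erase i₀, ∑ j ∈ univ.erase i₀, g (e i) (e i) (e j) (e j))
        ((∑ j ∈ univ.erase i₀, g (e i₀) (e i₀) (e j) (e j)) +
          (∑ i ∈ univ.erase i₀, g (e i) (e i) (e i₀) (e i₀)))
        ((∑ j ∈ univ.erase i₀, g (e i₀) u (e j) (e j)) +
          (∑ i ∈ univ.erase i₀, g (e i) (e i) (e i₀) u))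
        ((∑ j ∈ univ.erase i₀, g u (e i₀) (e j) (e j)) +
          (∑ i ∈ univ.erase i₀, g (e i) (e i) u (e i₀)))
        ((∑ j ∈ univ.erase i₀, g u u (e j) (e j)) +
          (∑ i ∈ univ.erase i₀, g (e i) (e i) u u))
        (g (e i₀) (e i₀) (e i₀) (e i₀)) (g u (e i₀) (e i₀) (e i₀)) (g (e i₀) u (e i₀) (e i₀))
        (g (e i₀) (e i₀) u (e i₀)) (g (e i₀) (e i₀) (e i₀) u)
        (g u u (e i₀) (e i₀)) (g (e i₀) (e i₀) u u) (g u (e i₀) (e i₀) u) (g (e i₀) u u (e i₀))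
        (g u (e i₀) u (e i₀)) (g (e i₀) u (e i₀) u)
        (g (e i₀) u u u) (g u (e i₀) u u) (g u u (e i₀) u) (g u u u (e i₀)) (g u u u u))
      simp only [Complex.add_re, Complex.re_ofReal_mul] at hre
      linarith [hre, hSre, hX1, hX2, hX3, hX4]
    have hL := limarg13 hstep
    -- symmetry bookkeeping
    have e1 : (∑ j ∈ univ.erase i₀, g u u (e j) (e j)).re
        = ∑ j ∈ univ.erase i₀, (g (e j) (e j) u u).re := by
      rw [Complex.re_sum]
      exact Finset.sum_congr rfl fun j _ => reswap13_re hsym u (e j)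
    have e2 : (∑ i ∈ univ.erase i₀, g (e i) (e i) u u).re
        = ∑ j ∈ univ.erase i₀, (g (e j) (e j) u u).re := Complex.re_sum _ _
    have e3 : (g u u (e i₀) (e i₀)).re = (g (e i₀) (e i₀) u u).re := reswap13_re hsym u (e i₀)
    have e4 : (g u (e i₀) (e i₀) u).re = (g (e i₀) (e i₀) u u).re :=
      congrArg Complex.re (hsym.1 u (e i₀) (e i₀) u)
    have e5 : (g (e i₀) u u (e i₀)).re = (g (e i₀) (e i₀) u u).re :=
      (congrArg Complex.re (hsym.1 (e i₀) u u (e i₀))).trans (reswap13_re hsym u (e i₀))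
    have e6 : (∑ j ∈ univ.erase i₀, g (e i₀) (e i₀) (e j) (e j)).re
        = ∑ j ∈ univ.erase i₀, (g (e i₀) (e i₀) (e j) (e j)).re := Complex.re_sum _ _
    have e7 : (∑ i ∈ univ.erase i₀, g (e i) (e i) (e i₀) (e i₀)).re
        = ∑ j ∈ univ.erase i₀, (g (e i₀) (e i₀) (e j) (e j)).re := by
      rw [Complex.re_sum]
      exact Finset.sum_congr rfl fun i _ => reswap13_re hsym (e i) (e i₀)
    rw [e1, e2, e3, e4, e5, e6, e7] at hL
    rw [← Finset.sum_erase_add Finset.univ (fun i => (g (e i) (e i) u u).re)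
        (Finset.mem_univ i₀),
      ← Finset.sum_erase_add Finset.univ (fun j => (g (e i₀) (e i₀) (e j) (e j)).re)
        (Finset.mem_univ i₀)]
    linarith [hL]
  -- sum the key inequalities
  calc ((k : ℝ) + 1) * (∑ i, (g (e i) (e i) u u).re)
      = ∑ i₀ : Fin k, ((∑ i, (g (e i) (e i) u u).re) + (g (e i₀) (e i₀) u u).re) := by
        rw [Finset.sum_add_distrib, Finset.sum_const, Finset.card_univ, Fintype.card_fin,
          nsmul_eq_mul]
        ring
    _ ≤ ∑ i₀ : Fin k, ∑ j, (g (e i₀) (e i₀) (e j) (e j)).re :=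
        Finset.sum_le_sum fun i₀ _ => key i₀
    _ = (∑ i, ∑ j, g (e i) (e i) (e j) (e j)).re := by
        rw [Complex.re_sum]
        exact Finset.sum_congr rfl fun i _ => (Complex.re_sum _ _).symm

set_option maxHeartbeats 1000000 in
open scoped ComplexInnerProductSpace in
/-- second part of the Ni–Zheng estimate (maximizing case). If the
`k`-dimensional subspace `P` maximizes `s` among all `k`-dimensional subspaces, then for every
orthonormal basis `{E_i}` of `P` and every `Z ∈ P^⊥`,
`Σ_i g(E_i,E_i,Z,Z) ≤ (s(P)/(k+1))·‖Z‖²`. -/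
theorem stmt_13 (n k : ℕ) (hk : 1 ≤ k) (hkn : k ≤ n)
    (g : EuclideanSpace ℂ (Fin n) → EuclideanSpace ℂ (Fin n) → EuclideanSpace ℂ (Fin n) →
      EuclideanSpace ℂ (Fin n) → ℂ)
    (hg : CurvatureType g) (hsym : KahlerSymmetries g)
    (P : Submodule ℂ (EuclideanSpace ℂ (Fin n))) (hP : Module.finrank ℂ P = k)
    (hmax :
      ∀ (E : OrthonormalBasis (Fin k) ℂ P) (Q : Submodule ℂ (EuclideanSpace ℂ (Fin n))),
        Module.finrank ℂ Q = k → ∀ E' : OrthonormalBasis (Fin k) ℂ Q,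
        (∑ i : Fin k, ∑ j : Fin k, g (E' i) (E' i) (E' j) (E' j)).re ≤
          (∑ i : Fin k, ∑ j : Fin k, g (E i) (E i) (E j) (E j)).re)
    (E : OrthonormalBasis (Fin k) ℂ P)
    (Z : EuclideanSpace ℂ (Fin n)) (hZ : Z ∈ Pᗮ) :
    (∑ i : Fin k, g (E i) (E i) Z Z).re ≤
      ((∑ i : Fin k, ∑ j : Fin k, g (E i) (E i) (E j) (E j)).re / ((k : ℝ) + 1)) * ‖Z‖ ^ 2 := by
  classical
  have he : Orthonormal ℂ (fun i => ((E i : P) : EuclideanSpace ℂ (Fin n))) :=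
    E.orthonormal.comp_linearIsometry P.subtypeₗᵢ
  have hmax' : ∀ F : Fin k → EuclideanSpace ℂ (Fin n), Orthonormal ℂ F →
      (∑ i, ∑ j, g (F i) (F i) (F j) (F j)).re ≤
        (∑ i : Fin k, ∑ j : Fin k, g (E i) (E i) (E j) (E j)).re := by
    intro F hF
    obtain ⟨Q, B, hQ, hB⟩ := transfer13 F hF
    have h := hmax E Q hQ B
    simpa only [hB] using h
  by_cases hZ0 : Z = 0
  · have h0 : ∀ x y : EuclideanSpace ℂ (Fin n), g x y 0 0 = 0 := by
      intro x y
      have h00 : (0 : EuclideanSpace ℂ (Fin n)) = (0:ℂ) • (0 : EuclideanSpace ℂ (Fin n)) :=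
        (zero_smul ℂ _).symm
      rw [h00, hg.2.2.2.2.2.1, zero_mul]
    subst hZ0
    simp [h0]
  · have hZn : ‖Z‖ ≠ 0 := norm_ne_zero_iff.mpr hZ0
    have hν : ((‖Z‖:ℝ):ℂ) ≠ 0 := Complex.ofReal_ne_zero.mpr hZn
    set u : EuclideanSpace ℂ (Fin n) := ((‖Z‖:ℂ))⁻¹ • Z with hu_def
    have hZu : Z = ((‖Z‖:ℂ)) • u := by rw [hu_def, smul_inv_smul₀ hν]
    have hu : ⟪u, u⟫ = 1 := by
      rw [hu_def, inner_smul_left, inner_smul_right, inner_self_eq_norm_sq_to_K, map_inv₀,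
        Complex.conj_ofReal]
      field_simp
      rw [sq]
      simp [sq]
    have heu : ∀ i : Fin k, ⟪((E i : P) : EuclideanSpace ℂ (Fin n)), u⟫ = 0 := by
      intro i
      have hPZ : ⟪((E i : P) : EuclideanSpace ℂ (Fin n)), Z⟫ = 0 :=
        ((Submodule.mem_orthogonal P Z).mp hZ) (E i) (SetLike.coe_mem (E i))
      rw [hu_def, inner_smul_right, hPZ, mul_zero]
    have hue : ∀ i : Fin k, ⟪u, ((E i : P) : EuclideanSpace ℂ (Fin n))⟫ = 0 := fun i => by
      rw [← inner_conj_symm, heu i, map_zero]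
    have hmain : ((k : ℝ) + 1) * (∑ i : Fin k, (g (E i) (E i) u u).re) ≤
        (∑ i : Fin k, ∑ j : Fin k, g (E i) (E i) (E j) (E j)).re :=
      mainlem13 g hg hsym (fun i => ((E i : P) : EuclideanSpace ℂ (Fin n))) he hmax' u hu heu hue
    have hscale : ∀ i : Fin k, g (E i) (E i) Z Z = ((‖Z‖^2 : ℝ):ℂ) * g (E i) (E i) u u := by
      intro i
      conv_lhs => rw [hZu]
      rw [hg.2.2.2.2.2.1, hg.2.2.2.2.2.2.2, Complex.conj_ofReal]
      push_cast
      ring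
    have hT : (∑ i : Fin k, g (E i) (E i) Z Z).re
        = ‖Z‖^2 * ∑ i : Fin k, (g (E i) (E i) u u).re := by
      rw [Complex.re_sum, Finset.mul_sum]
      exact Finset.sum_congr rfl fun i _ => by rw [hscale i, Complex.re_ofReal_mul]
    have hk1 : (0:ℝ) < (k:ℝ) + 1 := by positivity
    calc (∑ i : Fin k, g (E i) (E i) Z Z).re
        = ‖Z‖^2 * ∑ i : Fin k, (g (E i) (E i) u u).re := hT
      _ ≤ ‖Z‖^2 * ((∑ i : Fin k, ∑ j : Fin k, g (E i) (E i) (E j) (E j)).re / ((k:ℝ) + 1)) := by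
          apply mul_le_mul_of_nonneg_left _ (by positivity)
          rw [le_div_iff₀ hk1]
          linarith [hmain]
      _ = ((∑ i : Fin k, ∑ j : Fin k, g (E i) (E i) (E j) (E j)).re / ((k:ℝ) + 1)) * ‖Z‖ ^ 2 :=
          mul_comm _ _
end
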